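/- arXiv:1207.3593 — 12 statements merged into one kernel-verified Lean document; each statement's English description precedes it below -/
import Mathlib

section
/- Let V and V' be left vector spaces over division rings R and R' respectively, with dim V = n finite and n ≥ 3. Let g : V → V' be a non-trivial GL-mapping such that the R'-subspace of V' spanned by the image g(V) has dimension at most n. Then g is a strong semilinear embedding: there exist a ring homomorphism σ : R → R' and a σ-semilinear injective map l : V → V' with g = l, such that l sends every n linearly independent vectors of V to linearly independent vectors of V'. -/
open Submodule Function Module

section Aux
variable {R V : Type*} [DivisionRing R] [AddCommGroup V] [Module R V]

lemma aux_smul_cancel {R' V' : Type*} [DivisionRing R'] [AddCommGroup V'] [Module R' V']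
    {c d : R'} {v : V'} (hv : v ≠ 0) (h : c • v = d • v) : c = d := by
  have h0 : (c - d) • v = 0 := by rw [sub_smul, h, sub_self]
  rcases smul_eq_zero.mp h0 with h1 | h1
  · exact sub_eq_zero.mp h1
  · exact absurd h1 hv

lemma aux_pair_of_family {n : ℕ} {s : Fin n → V} (hs : LinearIndependent R s)
    {i j : Fin n} (hij : i ≠ j) : LinearIndependent R ![s i, s j] := by
  rw [LinearIndependent.pair_iff]
  intro a b hab
  have := Fintype.linearIndependent_iff.mp hs
    (fun m => if m = i then a else if m = j then b else 0) ?_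
  · exact ⟨by simpa [hij] using this i, by simpa [hij.symm, hij] using this j⟩
  · rw [← hab]
    rw [Finset.sum_eq_add_of_mem i j (Finset.mem_univ _) (Finset.mem_univ _) hij ?_]
    · simp [hij.symm, hij]
    · intro m _ hm
      simp [hm.1, hm.2]

variable {R V : Type*} [DivisionRing R] [AddCommGroup V] [Module R V]

lemma aux_update_indep {n : ℕ} {s : Fin n → V} (hs : LinearIndependent R s)
    {i j : Fin n} (hij : i ≠ j) :
    LinearIndependent R (Function.update s j (s j + s i)) := by
  rw [Fintype.linearIndependent_iff]
  intro c hc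
  have hexp : ∑ m, c m • Function.update s j (s j + s i) m
      = ∑ m, c m • s m + c j • s i := by
    have h1 : ∀ m : Fin n, c m • Function.update s j (s j + s i) m
        = c m • s m + (if m = j then c j • s i else 0) := by
      intro m
      by_cases h : m = j
      · subst h; simp [smul_add]
      · simp [h]
    rw [Finset.sum_congr rfl (fun m _ => h1 m), Finset.sum_add_distrib,
      Finset.sum_ite_eq' Finset.univ j (fun _ => c j • s i)]
    simp
  have hexp2 : ∑ m, c m • s m + c j • s i
      = ∑ m, (c m + if m = i then c j else 0) • s m := by
    have h2 : ∀ m : Fin n, (c m + if m = i then c j else 0) • s m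
        = c m • s m + (if m = i then c j • s i else 0) := by
      intro m
      by_cases h : m = i
      · subst h; simp [add_smul]
      · simp [h]
    rw [Finset.sum_congr rfl (fun m _ => h2 m), Finset.sum_add_distrib,
      Finset.sum_ite_eq' Finset.univ i (fun _ => c j • s i)]
    simp
  have hall := Fintype.linearIndependent_iff.mp hs
    (fun m => c m + if m = i then c j else 0) (by rw [← hexp2, ← hexp, hc])
  have hcj : c j = 0 := by simpa [hij.symm] using hall j
  intro m
  by_cases h : m = i
  · subst h; simpa [hcj] using hall m
  · simpa [h] using hall m



lemma aux_extend_d [FiniteDimensional R V] {n : ℕ} (hdim : finrank R V = n) :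
    ∀ (d k : ℕ) (h : k + d = n) (s : Fin k → V), LinearIndependent R s →
      ∃ t : Fin n → V, LinearIndependent R t ∧
        ∀ i : Fin k, t (Fin.castLE (by omega) i) = s i := by
  intro d
  induction d with
  | zero =>
    intro k h s hs
    subst h
    exact ⟨s, hs, fun i => rfl⟩
  | succ d ih =>
    intro k h s hs
    have hkn : k < n := by omega
    have hne : Submodule.span R (Set.range s) ≠ ⊤ := by
      intro htop
      have h1 : finrank R (Submodule.span R (Set.range s)) = k := by
        rw [finrank_span_eq_card hs]; simp
      rw [htop, finrank_top] at h1
      omega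
    obtain ⟨x, hx⟩ : ∃ x, x ∉ Submodule.span R (Set.range s) := by
      by_contra hc
      push_neg at hc
      exact hne (Submodule.eq_top_iff'.mpr hc)
    have hsnoc : LinearIndependent R (Fin.snoc s x : Fin (k+1) → V) :=
      linearIndependent_fin_snoc.mpr ⟨hs, hx⟩
    obtain ⟨t, ht, hti⟩ := ih (k+1) (by omega) _ hsnoc
    refine ⟨t, ht, fun i => ?_⟩
    have h2 := hti (Fin.castSucc i)
    rw [Fin.snoc_castSucc] at h2
    exact h2 ▸ rfl

lemma aux_extend [FiniteDimensional R V] {n k : ℕ} (hdim : finrank R V = n) (hk : k ≤ n)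
    {s : Fin k → V} (hs : LinearIndependent R s) :
    ∃ t : Fin n → V, LinearIndependent R t ∧
      ∀ i : Fin k, t (Fin.castLE hk i) = s i := by
  obtain ⟨t, ht, hti⟩ := aux_extend_d hdim (n - k) k (by omega) s hs
  exact ⟨t, ht, fun i => by rw [← hti i]⟩

lemma aux_equiv_of_bases [FiniteDimensional R V] {n : ℕ} (hn : 0 < n)
    (hdim : finrank R V = n) {s t : Fin n → V}
    (hs : LinearIndependent R s) (ht : LinearIndependent R t) :
    ∃ u : V ≃ₗ[R] V, ∀ i, u (s i) = t i := by
  haveI : Nonempty (Fin n) := ⟨⟨0, hn⟩⟩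
  let bs := basisOfLinearIndependentOfCardEqFinrank hs (by simp [hdim])
  let bt := basisOfLinearIndependentOfCardEqFinrank ht (by simp [hdim])
  refine ⟨bs.equiv bt (Equiv.refl _), fun i => ?_⟩
  have h1 : s i = bs i := by simp [bs]
  have h2 : bt i = t i := by simp [bt]
  rw [h1, ← h2]
  exact bs.equiv_apply i bt (Equiv.refl _)

lemma aux_trans_tuple [FiniteDimensional R V] {n k : ℕ} (hn : 0 < n)
    (hdim : finrank R V = n) (hk : k ≤ n) {s t : Fin k → V}
    (hs : LinearIndependent R s) (ht : LinearIndependent R t) :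
    ∃ u : V ≃ₗ[R] V, ∀ i, u (s i) = t i := by
  obtain ⟨s', hs', hsi⟩ := aux_extend hdim hk hs
  obtain ⟨t', ht', hti⟩ := aux_extend hdim hk ht
  obtain ⟨u, hu⟩ := aux_equiv_of_bases hn hdim hs' ht'
  exact ⟨u, fun i => by rw [← hsi i, hu, hti]⟩




lemma aux_pair_of_not_mem {x z : V} (hx : x ≠ 0) (hz : z ∉ span R {x}) :
    LinearIndependent R ![x, z] := by
  rw [LinearIndependent.pair_iff]
  intro a b hab
  by_cases hb : b = 0
  · subst hb
    rw [zero_smul, add_zero] at hab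
    rcases smul_eq_zero.mp hab with h | h
    · exact ⟨h, rfl⟩
    · exact absurd h hx
  · exfalso
    apply hz
    have h1 : b • z = (-a) • x := by
      rw [neg_smul]; exact eq_neg_of_add_eq_zero_right hab
    have h2 : z = (b⁻¹ * -a) • x := by
      rw [mul_smul, ← h1, smul_smul, inv_mul_cancel₀ hb, one_smul]
    exact h2 ▸ Submodule.mem_span_singleton.mpr ⟨_, rfl⟩

lemma aux_mem_span_of_not_indep {p q : V} (hp : p ≠ 0)
    (h : ¬ LinearIndependent R ![p, q]) : q ∈ span R {p} := by
  by_contra hq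
  exact h (aux_pair_of_not_mem hp hq)

lemma aux_exists_not_mem_span_singleton [FiniteDimensional R V]
    (h2 : 2 ≤ finrank R V) (p : V) : ∃ z, z ∉ span R {p} := by
  by_contra hc
  push_neg at hc
  have htop : span R {p} = ⊤ := Submodule.eq_top_iff'.mpr hc
  rcases eq_or_ne p 0 with rfl | hp
  · rw [Submodule.span_zero_singleton] at htop
    have h0 : finrank R V = 0 := by
      rw [← finrank_top R V, ← htop, finrank_bot]
    omega
  · have h1 : finrank R V = 1 := by
      rw [← finrank_top R V, ← htop, finrank_span_singleton hp]
    omega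

lemma aux_pair_elim {x y : V} (h : LinearIndependent R ![x, y]) {a b : R}
    (hab : a • x + b • y = 0) : a = 0 ∧ b = 0 :=
  LinearIndependent.pair_iff.mp h a b hab

lemma aux_pair_addfst {x y : V} (h : LinearIndependent R ![x, y]) :
    LinearIndependent R ![x + y, x] := by
  rw [LinearIndependent.pair_iff]
  intro a b hab
  have h1 : (a + b) • x + a • y = 0 := by
    rw [add_smul, smul_add] at *
    linear_combination (norm := abel) hab
  obtain ⟨h2, h3⟩ := aux_pair_elim h h1
  subst h3
  simp at h2
  exact ⟨rfl, h2⟩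


lemma aux_coeff_eq {n : ℕ} {v : Fin n → V} (hv : LinearIndependent R v)
    {c d : Fin n → R} (h : ∑ i, c i • v i = ∑ i, d i • v i) : ∀ i, c i = d i := by
  have h1 := Fintype.linearIndependent_iff.mp hv (c - d) (by
    have : ∑ i, (c - d) i • v i = ∑ i, (c i • v i - d i • v i) := by
      refine Finset.sum_congr rfl fun i _ => ?_
      rw [Pi.sub_apply, sub_smul]
    rw [this, Finset.sum_sub_distrib, h, sub_self])
  intro i
  have := h1 i
  rw [Pi.sub_apply] at this
  exact sub_eq_zero.mp this

lemma aux_pair_swap {x y : V} (h : LinearIndependent R ![x, y]) :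
    LinearIndependent R ![y, x] := by
  rw [LinearIndependent.pair_iff]
  intro a b hab
  have h1 : b • x + a • y = 0 := by linear_combination (norm := abel) hab
  obtain ⟨h2, h3⟩ := aux_pair_elim h h1
  exact ⟨h3, h2⟩

lemma aux_triple_elim {x y z : V} (h : LinearIndependent R ![x, y, z]) {a b c : R}
    (habc : a • x + b • y + c • z = 0) : a = 0 ∧ b = 0 ∧ c = 0 := by
  have h1 := Fintype.linearIndependent_iff.mp h ![a, b, c] (by
    simpa [Fin.sum_univ_three] using habc)
  exact ⟨by simpa using h1 0, by simpa using h1 1, by simpa using h1 2⟩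

lemma aux_triple_of_family {n : ℕ} {s : Fin n → V} (hs : LinearIndependent R s)
    {i j k : Fin n} (hij : i ≠ j) (hik : i ≠ k) (hjk : j ≠ k) :
    LinearIndependent R ![s i, s j, s k] := by
  have hinj : Function.Injective ![i, j, k] := by
    intro a b hab
    fin_cases a <;> fin_cases b <;> simp_all <;>
      first
        | rfl
        | exact absurd hab hij | exact absurd hab hik | exact absurd hab hjk
        | exact absurd hab.symm hij | exact absurd hab.symm hik | exact absurd hab.symm hjk
  have h1 := hs.comp ![i, j, k] hinj
  have h2 : s ∘ ![i, j, k] = ![s i, s j, s k] := by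
    funext m; fin_cases m <;> rfl
  rwa [h2] at h1

lemma aux_pair_addleft {x y z : V} (h : LinearIndependent R ![x, y, z]) :
    LinearIndependent R ![x + y, z] := by
  rw [LinearIndependent.pair_iff]
  intro a b hab
  have h1 : a • x + a • y + b • z = 0 := by
    rw [smul_add] at hab; linear_combination (norm := abel) hab
  obtain ⟨h2, _, h4⟩ := aux_triple_elim h h1
  exact ⟨h2, h4⟩

lemma aux_pair_sndadd {x y z : V} (h : LinearIndependent R ![x, y, z]) :
    LinearIndependent R ![x, y + z] := by
  rw [LinearIndependent.pair_iff]
  intro a b hab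
  have h1 : a • x + b • y + b • z = 0 := by
    rw [smul_add] at hab; linear_combination (norm := abel) hab
  obtain ⟨h2, h3, _⟩ := aux_triple_elim h h1
  exact ⟨h2, h3⟩

lemma aux_pair_shear {x z : V} (h : LinearIndependent R ![x, z]) (a : R) :
    LinearIndependent R ![x, a • x + z] := by
  rw [LinearIndependent.pair_iff]
  intro c d hcd
  have h1 : (c + d * a) • x + d • z = 0 := by
    rw [smul_add, smul_smul, add_smul] at *
    linear_combination (norm := abel) hcd
  obtain ⟨h2, h3⟩ := aux_pair_elim h h1
  subst h3
  simp at h2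
  exact ⟨h2, rfl⟩

lemma aux_pair_smulfst {x z : V} (h : LinearIndependent R ![x, z]) {a : R} (ha : a ≠ 0) :
    LinearIndependent R ![a • x, z] := by
  rw [LinearIndependent.pair_iff]
  intro c d hcd
  have h1 : (c * a) • x + d • z = 0 := by rw [mul_smul]; exact hcd
  obtain ⟨h2, h3⟩ := aux_pair_elim h h1
  exact ⟨by rcases mul_eq_zero.mp h2 with h | h; exact h; exact absurd h ha, h3⟩


end Aux


section GLayer
variable {R R' V V' : Type*} [DivisionRing R] [DivisionRing R']
  [AddCommGroup V] [Module R V] [AddCommGroup V'] [Module R' V']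
  {n : ℕ} [FiniteDimensional R V] {g : V → V'}

lemma g_ne_zero (hn : 0 < n) (hdim : finrank R V = n)
    (hGL : ∀ u : V ≃ₗ[R] V, ∃ u' : V' ≃ₗ[R'] V', g ∘ ⇑u = ⇑u' ∘ g)
    (hnt : ∃ x y : V, x ≠ 0 ∧ y ≠ 0 ∧ g x ≠ g y)
    {x : V} (hx : x ≠ 0) : g x ≠ 0 := by
  intro hgx
  obtain ⟨a, b, ha, hb, hab⟩ := hnt
  have key : ∀ y : V, y ≠ 0 → g y = 0 := by
    intro y hy
    obtain ⟨u, hu⟩ := aux_trans_tuple hn hdim (by omega : 1 ≤ n)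
      ((linearIndependent_unique_iff (v := fun _ : Fin 1 => x)).mpr hx)
      ((linearIndependent_unique_iff (v := fun _ : Fin 1 => y)).mpr hy)
    obtain ⟨u', hu'⟩ := hGL u
    have h1 : g (u x) = u' (g x) := congrFun hu' x
    rw [hu 0, hgx, map_zero] at h1
    exact h1
  exact hab ((key a ha).trans (key b hb).symm)

lemma g_ne_on_indep (hn3 : 3 ≤ n) (hdim : finrank R V = n)
    (hGL : ∀ u : V ≃ₗ[R] V, ∃ u' : V' ≃ₗ[R'] V', g ∘ ⇑u = ⇑u' ∘ g)
    (hnt : ∃ x y : V, x ≠ 0 ∧ y ≠ 0 ∧ g x ≠ g y)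
    {x y : V} (hxy : LinearIndependent R ![x, y]) : g x ≠ g y := by
  intro he
  have hn0 : 0 < n := by omega
  have key : ∀ p q : V, LinearIndependent R ![p, q] → g p = g q := by
    intro p q hpq
    obtain ⟨u, hu⟩ := aux_trans_tuple hn0 hdim (by omega : 2 ≤ n) hxy hpq
    obtain ⟨u', hu'⟩ := hGL u
    have h1 : g (u x) = u' (g x) := congrFun hu' x
    have h2 : g (u y) = u' (g y) := congrFun hu' y
    have hux : u x = p := by simpa using hu 0
    have huy : u y = q := by simpa using hu 1
    rw [hux] at h1; rw [huy] at h2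
    rw [h1, h2, he]
  have key2 : ∀ p q : V, p ≠ 0 → q ≠ 0 → g p = g q := by
    intro p q hp hq
    by_cases hind : LinearIndependent R ![p, q]
    · exact key p q hind
    · have hmem : q ∈ span R {p} := aux_mem_span_of_not_indep hp hind
      obtain ⟨z, hz⟩ := aux_exists_not_mem_span_singleton
        (by omega : 2 ≤ finrank R V) p
      have hpz : LinearIndependent R ![p, z] := aux_pair_of_not_mem hp hz
      have hqz : LinearIndependent R ![q, z] := by
        refine aux_pair_of_not_mem hq fun hzq => hz ?_
        obtain ⟨c, rfl⟩ := Submodule.mem_span_singleton.mp hmem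
        obtain ⟨d, rfl⟩ := Submodule.mem_span_singleton.mp hzq
        exact Submodule.mem_span_singleton.mpr ⟨d * c, mul_smul d c p⟩
      exact (key p z hpz).trans (key q z hqz).symm
  obtain ⟨a, b, ha, hb, hab⟩ := hnt
  exact hab (key2 a b ha hb)


lemma g_indep (hn3 : 3 ≤ n) (hdim : finrank R V = n)
    (hGL : ∀ u : V ≃ₗ[R] V, ∃ u' : V' ≃ₗ[R'] V', g ∘ ⇑u = ⇑u' ∘ g)
    (hnt : ∃ x y : V, x ≠ 0 ∧ y ≠ 0 ∧ g x ≠ g y)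
    {s : Fin n → V} (hs : LinearIndependent R s) :
    LinearIndependent R' (g ∘ s) := by
  have hn0 : 0 < n := by omega
  suffices h : ∀ k (hk : k ≤ n),
      LinearIndependent R' (fun i : Fin k => g (s (Fin.castLE hk i))) by
    exact h n le_rfl
  intro k
  induction k with
  | zero => intro hk; exact linearIndependent_empty_type
  | succ k ih =>
    intro hk
    have hk' : k ≤ n := by omega
    have hprev := ih hk'
    have heq : (fun i : Fin (k+1) => g (s (Fin.castLE hk i)))
        = Fin.snoc (fun i : Fin k => g (s (Fin.castLE hk' i))) (g (s ⟨k, hk⟩)) := by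
      funext i
      refine Fin.lastCases ?_ (fun j => ?_) i
      · rw [Fin.snoc_last]
        rfl
      · rw [Fin.snoc_castSucc]
        rfl
    rw [heq, linearIndependent_fin_snoc]
    refine ⟨hprev, fun hmem => ?_⟩
    rcases Nat.eq_zero_or_pos k with rfl | hkpos
    · have hz : g (s ⟨0, hk⟩) = 0 := by
        have hr : Set.range (fun i : Fin 0 => g (s (Fin.castLE hk' i))) = ∅ :=
          Set.range_eq_empty _
        rw [hr, Submodule.span_empty, Submodule.mem_bot] at hmem
        exact hmem
      exact g_ne_zero hn0 hdim hGL hnt (hs.ne_zero ⟨0, hk⟩) hz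
    · set m : Fin n := ⟨k, hk⟩ with hm_def
      set j : Fin n := ⟨0, by omega⟩ with hj_def
      have hjm : j ≠ m := by
        rw [hj_def, hm_def]
        intro hh
        rw [Fin.mk.injEq] at hh
        omega
      obtain ⟨u, hu⟩ := aux_equiv_of_bases hn0 hdim hs (aux_update_indep hs hjm)
      obtain ⟨u', hu'⟩ := hGL u
      have heq' : ∀ x, g (u x) = u' (g x) := fun x => congrFun hu' x
      have hfix : ∀ i : Fin n, i ≠ m → u (s i) = s i := by
        intro i him
        rw [hu i, Function.update_of_ne him]
      have hsub : span R' (Set.range (fun i : Fin k => g (s (Fin.castLE hk' i))))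
          ≤ LinearMap.eqLocus (u' : V' →ₗ[R'] V') LinearMap.id := by
        rw [Submodule.span_le]
        rintro _ ⟨i, rfl⟩
        rw [SetLike.mem_coe, LinearMap.mem_eqLocus]
        have hne : (Fin.castLE hk' i : Fin n) ≠ m := by
          rw [hm_def]
          intro hh
          apply_fun Fin.val at hh
          simp at hh
          have := i.isLt
          omega
        show u' (g (s (Fin.castLE hk' i))) = g (s (Fin.castLE hk' i))
        rw [← heq', hfix _ hne]
      have h1 : u' (g (s m)) = g (s m) := by
        have := hsub hmem
        rw [LinearMap.mem_eqLocus] at this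
        exact this
      have h2 : g (s m + s j) = g (s m) := by
        have hum : u (s m) = s m + s j := by rw [hu m, Function.update_self]
        rw [← hum, heq', h1]
      exact g_ne_on_indep hn3 hdim hGL hnt
        (aux_pair_addfst (aux_pair_of_family hs hjm.symm)) h2

lemma g_pair_indep (hn3 : 3 ≤ n) (hdim : finrank R V = n)
    (hGL : ∀ u : V ≃ₗ[R] V, ∃ u' : V' ≃ₗ[R'] V', g ∘ ⇑u = ⇑u' ∘ g)
    (hnt : ∃ x y : V, x ≠ 0 ∧ y ≠ 0 ∧ g x ≠ g y)
    {x y : V} (hxy : LinearIndependent R ![x, y]) :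
    LinearIndependent R' ![g x, g y] := by
  obtain ⟨s, hs, hti⟩ := aux_extend hdim (by omega : 2 ≤ n) hxy
  have h0 : s (Fin.castLE (by omega) (0 : Fin 2)) = x := by simpa using hti 0
  have h1 : s (Fin.castLE (by omega) (1 : Fin 2)) = y := by simpa using hti 1
  have hgs := g_indep hn3 hdim hGL hnt hs
  have hne : (Fin.castLE (by omega : 2 ≤ n) (0 : Fin 2))
      ≠ (Fin.castLE (by omega : 2 ≤ n) (1 : Fin 2)) := by
    intro hh
    apply_fun Fin.val at hh
    simp at hh
  have := aux_pair_of_family hgs hne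
  simp only [Function.comp_apply] at this
  rwa [h0, h1] at this

lemma g_span (hn3 : 3 ≤ n) (hdim : finrank R V = n)
    (hGL : ∀ u : V ≃ₗ[R] V, ∃ u' : V' ≃ₗ[R'] V', g ∘ ⇑u = ⇑u' ∘ g)
    (hnt : ∃ x y : V, x ≠ 0 ∧ y ≠ 0 ∧ g x ≠ g y)
    (hspan : Module.rank R' (span R' (Set.range g)) ≤ n)
    {s : Fin n → V} (hs : LinearIndependent R s) :
    span R' (Set.range (g ∘ s)) = span R' (Set.range g) := by
  have hgind := g_indep hn3 hdim hGL hnt hs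
  have hfin : FiniteDimensional R' (span R' (Set.range g)) :=
    Module.rank_lt_aleph0_iff.mp (lt_of_le_of_lt hspan (Cardinal.nat_lt_aleph0 n))
  have hle : span R' (Set.range (g ∘ s)) ≤ span R' (Set.range g) :=
    span_mono (Set.range_comp_subset_range s g)
  have h1 : finrank R' (span R' (Set.range g)) ≤ n := finrank_le_of_rank_le hspan
  have h2 : finrank R' (span R' (Set.range (g ∘ s))) = n := by
    rw [finrank_span_eq_card hgind]
    simp
  exact Submodule.eq_of_le_of_finrank_le hle (by omega)

lemma g_expand (hn3 : 3 ≤ n) (hdim : finrank R V = n)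
    (hGL : ∀ u : V ≃ₗ[R] V, ∃ u' : V' ≃ₗ[R'] V', g ∘ ⇑u = ⇑u' ∘ g)
    (hnt : ∃ x y : V, x ≠ 0 ∧ y ≠ 0 ∧ g x ≠ g y)
    (hspan : Module.rank R' (span R' (Set.range g)) ≤ n)
    {s : Fin n → V} (hs : LinearIndependent R s) (z : V) :
    ∃ c : Fin n → R', g z = ∑ i, c i • g (s i) := by
  have hz : g z ∈ span R' (Set.range (g ∘ s)) := by
    rw [g_span hn3 hdim hGL hnt hspan hs]
    exact subset_span ⟨z, rfl⟩
  obtain ⟨c, hc⟩ := (mem_span_range_iff_exists_fun R').mp hz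
  exact ⟨c, hc.symm⟩

lemma g_kill (hn3 : 3 ≤ n) (hdim : finrank R V = n)
    (hGL : ∀ u : V ≃ₗ[R] V, ∃ u' : V' ≃ₗ[R'] V', g ∘ ⇑u = ⇑u' ∘ g)
    (hnt : ∃ x y : V, x ≠ 0 ∧ y ≠ 0 ∧ g x ≠ g y)
    {s : Fin n → V} (hs : LinearIndependent R s) {m j : Fin n} (hjm : j ≠ m)
    {z : V} {c : Fin n → R'} (hc : g z = ∑ i, c i • g (s i))
    (hfixz : ∀ u : V ≃ₗ[R] V,
      (∀ i, u (s i) = Function.update s m (s m + s j) i) → u z = z) :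
    c m = 0 := by
  have hn0 : 0 < n := by omega
  obtain ⟨u, hu⟩ := aux_equiv_of_bases hn0 hdim hs (aux_update_indep hs hjm)
  obtain ⟨u', hu'⟩ := hGL u
  have heq' : ∀ x, g (u x) = u' (g x) := fun x => congrFun hu' x
  have h1 : g z = ∑ i, c i • g (Function.update s m (s m + s j) i) := by
    conv_lhs => rw [← hfixz u hu]
    rw [heq', hc, map_sum]
    refine Finset.sum_congr rfl fun i _ => ?_
    rw [map_smul, ← heq', hu i]
  have h2 : ∑ i, (c i • g (Function.update s m (s m + s j) i) - c i • g (s i)) = 0 := by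
    rw [Finset.sum_sub_distrib, ← h1, ← hc, sub_self]
  rw [Finset.sum_eq_single m (fun b _ hb => by rw [Function.update_of_ne hb, sub_self])
    (fun hb => absurd (Finset.mem_univ m) hb)] at h2
  rw [Function.update_self] at h2
  by_contra hcm
  have h3 : g (s m + s j) = g (s m) :=
    smul_right_injective V' hcm (sub_eq_zero.mp h2)
  exact g_ne_on_indep hn3 hdim hGL hnt
    (aux_pair_addfst (aux_pair_of_family hs hjm.symm)) h3

lemma g_zero (hn3 : 3 ≤ n) (hdim : finrank R V = n)
    (hGL : ∀ u : V ≃ₗ[R] V, ∃ u' : V' ≃ₗ[R'] V', g ∘ ⇑u = ⇑u' ∘ g)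
    (hnt : ∃ x y : V, x ≠ 0 ∧ y ≠ 0 ∧ g x ≠ g y)
    (hspan : Module.rank R' (span R' (Set.range g)) ≤ n) : g 0 = 0 := by
  have hn0 : 0 < n := by omega
  obtain ⟨s, hs, -⟩ := aux_extend hdim (Nat.zero_le n) (s := Fin.elim0)
    linearIndependent_empty_type
  obtain ⟨c, hc⟩ := g_expand hn3 hdim hGL hnt hspan hs 0
  have hgs := g_indep hn3 hdim hGL hnt hs
  have hperm : ∀ (i j : Fin n), c i = c j := by
    intro i j
    rcases eq_or_ne i j with rfl | hij
    · rfl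
    · set σ := Equiv.swap i j with hσ
      have hsσ : LinearIndependent R (s ∘ σ) := hs.comp σ σ.injective
      obtain ⟨u, hu⟩ := aux_equiv_of_bases hn0 hdim hs hsσ
      obtain ⟨u', hu'⟩ := hGL u
      have heq' : ∀ x, g (u x) = u' (g x) := fun x => congrFun hu' x
      have h1 : g 0 = ∑ m, c m • g (s (σ m)) := by
        conv_lhs => rw [show (0 : V) = u 0 from (map_zero u).symm]
        rw [heq', hc, map_sum]
        refine Finset.sum_congr rfl fun m _ => ?_
        rw [map_smul, ← heq', hu m]
        rfl
      have h2 : ∑ m, (fun m => c (σ.symm m)) (σ m) • g (s (σ m))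
          = ∑ m, (fun m => c (σ.symm m)) m • g (s m) := by
        exact Equiv.sum_comp σ (fun m => (fun m' => c (σ.symm m')) m • g (s m))
      have h3 : g 0 = ∑ m, c (σ.symm m) • g (s m) := by
        rw [h1, ← h2]
        refine Finset.sum_congr rfl fun m _ => ?_
        simp
      have h4 := aux_coeff_eq hgs (hc.symm.trans h3) i
      rw [hσ] at h4
      simpa using h4
  have hc0 : c ⟨0, by omega⟩ = 0 := by
    refine g_kill hn3 hdim hGL hnt hs (m := ⟨0, by omega⟩) (j := ⟨1, by omega⟩)
      ?_ hc (fun u _ => map_zero u)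
    intro hh
    apply_fun Fin.val at hh
    simp at hh
  have hall : ∀ i, c i = 0 := fun i => (hperm i ⟨0, by omega⟩).trans hc0
  rw [hc]
  exact Finset.sum_eq_zero fun i _ => by rw [hall i, zero_smul]

lemma g_pair_add (hn3 : 3 ≤ n) (hdim : finrank R V = n)
    (hGL : ∀ u : V ≃ₗ[R] V, ∃ u' : V' ≃ₗ[R'] V', g ∘ ⇑u = ⇑u' ∘ g)
    (hnt : ∃ x y : V, x ≠ 0 ∧ y ≠ 0 ∧ g x ≠ g y)
    (hspan : Module.rank R' (span R' (Set.range g)) ≤ n)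
    {x y : V} (hxy : LinearIndependent R ![x, y]) :
    ∃ d1 d2 : R', d1 ≠ 0 ∧ d2 ≠ 0 ∧ g (x + y) = d1 • g x + d2 • g y := by
  obtain ⟨s, hs, hti⟩ := aux_extend hdim (by omega : 2 ≤ n) hxy
  set i0 : Fin n := Fin.castLE (by omega) (0 : Fin 2) with hi0
  set i1 : Fin n := Fin.castLE (by omega) (1 : Fin 2) with hi1
  have h0 : s i0 = x := by simpa using hti 0
  have h1 : s i1 = y := by simpa using hti 1
  have hne01 : i0 ≠ i1 := by
    rw [hi0, hi1]
    intro hh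
    apply_fun Fin.val at hh
    simp at hh
  obtain ⟨c, hc⟩ := g_expand hn3 hdim hGL hnt hspan hs (x + y)
  have hkill : ∀ m : Fin n, m ≠ i0 → m ≠ i1 → c m = 0 := by
    intro m hm0 hm1
    refine g_kill hn3 hdim hGL hnt hs (m := m) (j := i0) (Ne.symm hm0) hc ?_
    intro u hu
    have e0 : u (s i0) = s i0 := by rw [hu i0, Function.update_of_ne hm0.symm]
    have e1 : u (s i1) = s i1 := by rw [hu i1, Function.update_of_ne hm1.symm]
    rw [← h0, ← h1, map_add, e0, e1]
  have hsum : g (x + y) = c i0 • g x + c i1 • g y := by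
    rw [hc, Finset.sum_eq_add_of_mem i0 i1 (Finset.mem_univ _) (Finset.mem_univ _)
      hne01 (fun m _ hm => by rw [hkill m hm.1 hm.2, zero_smul]), h0, h1]
  have hxyy : LinearIndependent R ![x + y, y] := by
    have := aux_pair_addfst (aux_pair_swap hxy)
    rwa [add_comm y x] at this
  have hxyx : LinearIndependent R ![x + y, x] := aux_pair_addfst hxy
  refine ⟨c i0, c i1, ?_, ?_, hsum⟩
  · intro hd
    rw [hd, zero_smul, zero_add] at hsum
    have himg := g_pair_indep hn3 hdim hGL hnt hxyy
    have : (1 : R') • g (x + y) + (-(c i1)) • g y = 0 := by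
      rw [one_smul, neg_smul, hsum]
      abel
    exact one_ne_zero (aux_pair_elim himg this).1
  · intro hd
    rw [hd, zero_smul, add_zero] at hsum
    have himg := g_pair_indep hn3 hdim hGL hnt hxyx
    have : (1 : R') • g (x + y) + (-(c i0)) • g x = 0 := by
      rw [one_smul, neg_smul, hsum]
      abel
    exact one_ne_zero (aux_pair_elim himg this).1

lemma g_add_transport (hn3 : 3 ≤ n) (hdim : finrank R V = n)
    (hGL : ∀ u : V ≃ₗ[R] V, ∃ u' : V' ≃ₗ[R'] V', g ∘ ⇑u = ⇑u' ∘ g)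
    {p q x y : V} {d1 d2 : R'} (hpq : LinearIndependent R ![p, q])
    (hxy : LinearIndependent R ![x, y]) (hd : g (p + q) = d1 • g p + d2 • g q) :
    g (x + y) = d1 • g x + d2 • g y := by
  have hn0 : 0 < n := by omega
  obtain ⟨u, hu⟩ := aux_trans_tuple hn0 hdim (by omega : 2 ≤ n) hpq hxy
  obtain ⟨u', hu'⟩ := hGL u
  have heq' : ∀ z, g (u z) = u' (g z) := fun z => congrFun hu' z
  have hup : u p = x := by simpa using hu 0
  have huq : u q = y := by simpa using hu 1
  calc g (x + y) = g (u (p + q)) := by rw [map_add, hup, huq]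
    _ = u' (g (p + q)) := heq' _
    _ = d1 • u' (g p) + d2 • u' (g q) := by rw [hd, map_add, map_smul, map_smul]
    _ = d1 • g x + d2 • g y := by rw [← heq', ← heq', hup, huq]

lemma g_add_indep (hn3 : 3 ≤ n) (hdim : finrank R V = n)
    (hGL : ∀ u : V ≃ₗ[R] V, ∃ u' : V' ≃ₗ[R'] V', g ∘ ⇑u = ⇑u' ∘ g)
    (hnt : ∃ x y : V, x ≠ 0 ∧ y ≠ 0 ∧ g x ≠ g y)
    (hspan : Module.rank R' (span R' (Set.range g)) ≤ n)
    {x y : V} (hxy : LinearIndependent R ![x, y]) :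
    g (x + y) = g x + g y := by
  obtain ⟨s, hs, -⟩ := aux_extend hdim (Nat.zero_le n) (s := Fin.elim0)
    linearIndependent_empty_type
  have hgs := g_indep hn3 hdim hGL hnt hs
  set j0 : Fin n := ⟨0, by omega⟩
  set j1 : Fin n := ⟨1, by omega⟩
  set j2 : Fin n := ⟨2, by omega⟩
  have h01 : j0 ≠ j1 := by intro hh; apply_fun Fin.val at hh; simp at hh
  have h02 : j0 ≠ j2 := by intro hh; apply_fun Fin.val at hh; simp at hh
  have h12 : j1 ≠ j2 := by intro hh; apply_fun Fin.val at hh; simp [j1, j2] at hh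
  set p := s j0
  set q := s j1
  set r := s j2
  have hpq : LinearIndependent R ![p, q] := aux_pair_of_family hs h01
  have htrip : LinearIndependent R ![p, q, r] := aux_triple_of_family hs h01 h02 h12
  have htrip' : LinearIndependent R' ![g p, g q, g r] := by
    have := aux_triple_of_family hgs h01 h02 h12
    simpa using this
  obtain ⟨d1, d2, hd1, hd2, hd⟩ := g_pair_add hn3 hdim hGL hnt hspan hpq
  have htr : ∀ {a b : V}, LinearIndependent R ![a, b] → g (a + b) = d1 • g a + d2 • g b :=
    fun hab => g_add_transport hn3 hdim hGL hpq hab hd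
  have eA : g (p + q + r) = d1 • (d1 • g p + d2 • g q) + d2 • g r := by
    rw [htr (aux_pair_addleft htrip), hd]
  have eB : g (p + q + r) = d1 • g p + d2 • (d1 • g q + d2 • g r) := by
    rw [add_assoc, htr (aux_pair_sndadd htrip), htr (aux_pair_of_family hs h12)]
  have ekey : (d1 * d1 - d1) • g p + (d1 * d2 - d2 * d1) • g q + (d2 - d2 * d2) • g r
      = 0 := by
    rw [sub_smul, sub_smul, sub_smul, ← smul_smul, ← smul_smul, ← smul_smul, ← smul_smul]
    have := eA.symm.trans eB
    rw [smul_add, smul_add] at this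
    linear_combination (norm := abel) this
  obtain ⟨e1, -, e3⟩ := aux_triple_elim htrip' ekey
  have hd1' : d1 = 1 := by
    have : d1 * (d1 - 1) = 0 := by rw [mul_sub, mul_one]; exact e1
    rcases mul_eq_zero.mp this with h | h
    · exact absurd h hd1
    · exact sub_eq_zero.mp h
  have hd2' : d2 = 1 := by
    have h5 : d2 * (1 - d2) = 0 := by rw [mul_sub, mul_one]; exact e3
    rcases mul_eq_zero.mp h5 with h | h
    · exact absurd h hd2
    · exact (sub_eq_zero.mp h).symm
  rw [htr hxy, hd1', hd2', one_smul, one_smul]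

lemma g_smul_exists (hn3 : 3 ≤ n) (hdim : finrank R V = n)
    (hGL : ∀ u : V ≃ₗ[R] V, ∃ u' : V' ≃ₗ[R'] V', g ∘ ⇑u = ⇑u' ∘ g)
    (hnt : ∃ x y : V, x ≠ 0 ∧ y ≠ 0 ∧ g x ≠ g y)
    (hspan : Module.rank R' (span R' (Set.range g)) ≤ n)
    {x : V} (hx : x ≠ 0) (a : R) : ∃ c : R', g (a • x) = c • g x := by
  rcases eq_or_ne a 0 with rfl | ha
  · exact ⟨0, by rw [zero_smul, zero_smul, g_zero hn3 hdim hGL hnt hspan]⟩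
  obtain ⟨s, hs, hti⟩ := aux_extend hdim (by omega : 1 ≤ n)
    ((linearIndependent_unique_iff (v := fun _ : Fin 1 => x)).mpr hx)
  set i0 : Fin n := Fin.castLE (by omega) (0 : Fin 1) with hi0
  have h0 : s i0 = x := hti 0
  obtain ⟨c, hc⟩ := g_expand hn3 hdim hGL hnt hspan hs (a • x)
  have hkill : ∀ m : Fin n, m ≠ i0 → c m = 0 := by
    intro m hm0
    refine g_kill hn3 hdim hGL hnt hs (m := m) (j := i0) (Ne.symm hm0) hc ?_
    intro u hu
    have e0 : u (s i0) = s i0 := by rw [hu i0, Function.update_of_ne hm0.symm]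
    rw [← h0, map_smul, e0]
  refine ⟨c i0, ?_⟩
  rw [hc, Finset.sum_eq_single i0 (fun b _ hb => by rw [hkill b hb, zero_smul])
    (fun hb => absurd (Finset.mem_univ i0) hb), h0]

lemma g_smul_transport (hn3 : 3 ≤ n) (hdim : finrank R V = n)
    (hGL : ∀ u : V ≃ₗ[R] V, ∃ u' : V' ≃ₗ[R'] V', g ∘ ⇑u = ⇑u' ∘ g)
    (hnt : ∃ x y : V, x ≠ 0 ∧ y ≠ 0 ∧ g x ≠ g y)
    {x y : V} (hx : x ≠ 0) (hy : y ≠ 0) (a : R) {c : R'}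
    (hcx : g (a • x) = c • g x) : g (a • y) = c • g y := by
  have hn0 : 0 < n := by omega
  obtain ⟨u, hu⟩ := aux_trans_tuple hn0 hdim (by omega : 1 ≤ n)
    ((linearIndependent_unique_iff (v := fun _ : Fin 1 => x)).mpr hx)
    ((linearIndependent_unique_iff (v := fun _ : Fin 1 => y)).mpr hy)
  obtain ⟨u', hu'⟩ := hGL u
  have heq' : ∀ z, g (u z) = u' (g z) := fun z => congrFun hu' z
  have hux : u x = y := hu 0
  calc g (a • y) = g (u (a • x)) := by rw [map_smul, hux]
    _ = u' (g (a • x)) := heq' _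
    _ = c • u' (g x) := by rw [hcx, map_smul]
    _ = c • g y := by rw [← heq', hux]

end GLayer


/-- **Theorem 1 (Pankov).** Let `V`, `V'` be left vector spaces over division rings `R`, `R'`,
with `dim V = n` finite, `n ≥ 3`. If `g : V → V'` is a non-trivial GL-mapping and the
subspace of `V'` spanned by `g(V)` has dimension at most `n`, then `g` is a strong
semilinear embedding. -/
theorem stmt_0 {R R' V V' : Type*} [DivisionRing R] [DivisionRing R']
    [AddCommGroup V] [Module R V] [AddCommGroup V'] [Module R' V']
    (n : ℕ) (hn : 3 ≤ n) [FiniteDimensional R V] (hdim : Module.finrank R V = n)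
    (g : V → V')
    (hGL : ∀ u : V ≃ₗ[R] V, ∃ u' : V' ≃ₗ[R'] V', g ∘ ⇑u = ⇑u' ∘ g)
    (hnt : ∃ x y : V, x ≠ 0 ∧ y ≠ 0 ∧ g x ≠ g y)
    (hspan : Module.rank R' (Submodule.span R' (Set.range g)) ≤ n) :
    ∃ (σ : R →+* R') (l : V →ₛₗ[σ] V'),
      ⇑l = g ∧ Function.Injective l ∧
      ∀ v : Fin n → V, LinearIndependent R v → LinearIndependent R' (⇑l ∘ v) := by
  have hn0 : 0 < n := by omega
  have hg0 : g 0 = 0 := g_zero hn hdim hGL hnt hspan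
  obtain ⟨s₀, hs₀, -⟩ := aux_extend hdim (Nat.zero_le n) (s := Fin.elim0)
    linearIndependent_empty_type
  set j0 : Fin n := ⟨0, by omega⟩
  set j1 : Fin n := ⟨1, by omega⟩
  have h01 : j0 ≠ j1 := by intro hh; apply_fun Fin.val at hh; simp at hh
  set x₀ : V := s₀ j0 with hx₀def
  have hx₀ : x₀ ≠ 0 := hs₀.ne_zero j0
  have hgx₀ : g x₀ ≠ 0 := g_ne_zero hn0 hdim hGL hnt hx₀
  classical
  set σf : R → R' := fun a =>
    if ha : a = 0 then 0 else Classical.choose (g_smul_exists hn hdim hGL hnt hspan hx₀ a)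
    with hσf
  have hσ : ∀ a : R, g (a • x₀) = σf a • g x₀ := by
    intro a
    rcases eq_or_ne a 0 with rfl | ha
    · rw [hσf]; simp [hg0]
    · rw [hσf]
      simp only [dif_neg ha]
      exact Classical.choose_spec (g_smul_exists hn hdim hGL hnt hspan hx₀ a)
  have hsmul : ∀ (a : R) (x : V), g (a • x) = σf a • g x := by
    intro a x
    rcases eq_or_ne x 0 with rfl | hx
    · rw [smul_zero, hg0, smul_zero]
    · exact g_smul_transport hn hdim hGL hnt hx₀ hx a (hσ a)
  have hσ0 : σf 0 = 0 := by rw [hσf]; simp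
  have hσ1 : σf 1 = 1 := by
    refine aux_smul_cancel hgx₀ ?_
    rw [one_smul, ← hσ 1, one_smul]
  have hσmul : ∀ a b : R, σf (a * b) = σf a * σf b := by
    intro a b
    refine aux_smul_cancel hgx₀ ?_
    rw [← hσ (a * b), mul_smul, hsmul a (b • x₀), hσ b, smul_smul]
  have hone : ∀ a : R, σf (1 + a) = 1 + σf a := by
    intro a
    set x : V := s₀ j0
    set z : V := s₀ j1
    have hxz : LinearIndependent R ![x, z] := aux_pair_of_family hs₀ h01
    have hgx : g x ≠ 0 := hgx₀
    have E2 : g (a • x + z) = σf a • g x + g z := by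
      rcases eq_or_ne a 0 with rfl | ha
      · rw [zero_smul, zero_add, hσ0, zero_smul, zero_add]
      · rw [g_add_indep hn hdim hGL hnt hspan (aux_pair_smulfst hxz ha), hsmul]
    have E1 : g ((1 + a) • x + z) = (1 + σf a) • g x + g z := by
      have hrw : (1 + a) • x + z = x + (a • x + z) := by
        rw [add_smul, one_smul, add_assoc]
      rw [hrw, g_add_indep hn hdim hGL hnt hspan (aux_pair_shear hxz a), E2,
        add_smul, one_smul, add_assoc]
    rcases eq_or_ne (1 + a) 0 with h1a | h1a
    · have hz' : g z = (1 + σf a) • g x + g z := by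
        rw [← E1, h1a, zero_smul, zero_add]
      have : (0 : R') • g x + g z = (1 + σf a) • g x + g z := by
        rw [zero_smul, zero_add]; exact hz'
      have h2 := add_right_cancel this
      rw [h1a, hσ0]
      exact aux_smul_cancel hgx h2
    · have E3 : g ((1 + a) • x + z) = σf (1 + a) • g x + g z := by
        rw [g_add_indep hn hdim hGL hnt hspan (aux_pair_smulfst hxz h1a), hsmul]
      have h2 := add_right_cancel (E3.symm.trans E1)
      exact aux_smul_cancel hgx h2
  have hσadd : ∀ p q : R, σf (p + q) = σf p + σf q := by
    intro p q
    rcases eq_or_ne p 0 with rfl | hp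
    · rw [zero_add, hσ0, zero_add]
    · have hfact : p + q = p * (1 + p⁻¹ * q) := by
        rw [mul_add, mul_one, ← mul_assoc, mul_inv_cancel₀ hp, one_mul]
      rw [hfact, hσmul, hone, mul_add, mul_one, hσmul, ← mul_assoc, ← hσmul,
        mul_inv_cancel₀ hp, hσ1, one_mul]
  have hadd : ∀ x y : V, g (x + y) = g x + g y := by
    intro x y
    rcases eq_or_ne x 0 with rfl | hx
    · rw [zero_add, hg0, zero_add]
    rcases eq_or_ne y 0 with rfl | hy
    · rw [add_zero, hg0, add_zero]
    by_cases hind : LinearIndependent R ![x, y]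
    · exact g_add_indep hn hdim hGL hnt hspan hind
    · obtain ⟨a, rfl⟩ := Submodule.mem_span_singleton.mp
        (aux_mem_span_of_not_indep hx hind)
      have : x + a • x = (1 + a) • x := by rw [add_smul, one_smul]
      rw [this, hsmul, hone, add_smul, one_smul, hsmul]
  refine ⟨⟨⟨⟨σf, hσ1⟩, hσmul⟩, hσ0, hσadd⟩,
    ⟨⟨g, fun x y => hadd x y⟩, fun a x => hsmul a x⟩, rfl, ?_, ?_⟩
  · intro x y hxy
    have hxy' : g x = g y := hxy
    by_contra hne
    have hsub : x - y ≠ 0 := sub_ne_zero.mpr hne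
    have hgsub : g (x - y) = 0 := by
      have h1 : g ((x - y) + y) = g (x - y) + g y := hadd _ _
      rw [sub_add_cancel, hxy'] at h1
      exact right_eq_add.mp h1
    exact g_ne_zero hn0 hdim hGL hnt hsub hgsub
  · intro v hv
    exact g_indep hn hdim hGL hnt hv
end

section
/- Let V be a left vector space over a division ring R and let X be a finite subset of V containing more than one vector. If every permutation of X extends to a linear automorphism of V (i.e., for every bijection p : X → X there exists a linear automorphism u of V with u(x) = p(x) for all x ∈ X), then either X consists of linearly independent vectors, or X consists of vectors x₁, …, x_m, −(x₁ + ⋯ + x_m) where x₁, …, x_m are linearly independent. -/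
/-- **Proposition 1 (Pankov).** If every permutation of a finite subset `X ⊂ V` with
more than one element extends to a linear automorphism of `V`, then `X` consists of
linearly independent vectors, or consists of `x₁, …, x_m, -(x₁ + ⋯ + x_m)` with
`x₁, …, x_m` linearly independent. -/
theorem stmt_2 {R V : Type*} [DivisionRing R] [AddCommGroup V] [Module R V]
    (X : Finset V) (hX : 1 < X.card)
    (hperm : ∀ p : {x // x ∈ X} ≃ {x // x ∈ X},
      ∃ u : V ≃ₗ[R] V, ∀ x : {x // x ∈ X}, u (x : V) = (p x : V)) :
    LinearIndependent R (fun x : {x // x ∈ X} => (x : V)) ∨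
    ∃ (m : ℕ) (v : Fin m → V), LinearIndependent R v ∧
      (X : Set V) = Set.range v ∪ {-(∑ i, v i)} := by
  classical
  -- Key: every linear relation on X has constant coefficients.
  have key : ∀ g : V → R, ∑ z ∈ X, g z • z = 0 → ∀ a ∈ X, ∀ b ∈ X, g a = g b := by
    intro g hg a ha b hb
    rcases eq_or_ne a b with rfl | hab
    · rfl
    obtain ⟨u, hu⟩ := hperm (Equiv.swap ⟨a, ha⟩ ⟨b, hb⟩)
    set q : Equiv.Perm V := Equiv.swap a b with hq
    have huq : ∀ z, ∀ hz : z ∈ X, u z = q z := by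
      intro z hz
      have h := hu ⟨z, hz⟩
      rw [h, hq, Equiv.swap_apply_def, Equiv.swap_apply_def]
      split_ifs with h1 h2 <;> simp_all [Subtype.ext_iff]
    have hqmem : ∀ z, z ∈ X ↔ q z ∈ X := by
      intro z
      rw [hq, Equiv.swap_apply_def]
      split_ifs with h1 h2 <;> simp_all
    have h1 : ∑ z ∈ X, g z • q z = 0 := by
      calc ∑ z ∈ X, g z • q z = u (∑ z ∈ X, g z • z) := by
            rw [map_sum]
            refine Finset.sum_congr rfl fun z hz => ?_
            rw [map_smul, huq z hz]
        _ = 0 := by rw [hg, map_zero]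
    have h2 : ∑ w ∈ X, g (q w) • w = 0 := by
      rw [← h1]
      refine (Finset.sum_equiv q (fun z => hqmem z) ?_).symm
      intro z hz
      have : q (q z) = z := by
        rw [hq]; exact Equiv.swap_apply_self a b z
      rw [this]
    have h3 : ∑ w ∈ X, (g (q w) - g w) • w = 0 := by
      have : ∑ w ∈ X, (g (q w) - g w) • w
          = (∑ w ∈ X, g (q w) • w) - ∑ w ∈ X, g w • w := by
        rw [← Finset.sum_sub_distrib]
        exact Finset.sum_congr rfl fun w _ => sub_smul _ _ _
      rw [this, h2, hg, sub_zero]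
    have h4 : ∑ w ∈ ({a, b} : Finset V), (g (q w) - g w) • w = 0 := by
      rw [← h3]
      refine Finset.sum_subset ?_ ?_
      · intro w hw
        rcases Finset.mem_insert.1 hw with rfl | hw
        · exact ha
        · rw [Finset.mem_singleton.1 hw]; exact hb
      · intro w hwX hw
        simp only [Finset.mem_insert, Finset.mem_singleton, not_or] at hw
        have : q w = w := by rw [hq]; exact Equiv.swap_apply_of_ne_of_ne hw.1 hw.2
        rw [this, sub_self, zero_smul]
    rw [Finset.sum_pair hab] at h4
    have hqa : q a = b := by rw [hq]; exact Equiv.swap_apply_left a b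
    have hqb : q b = a := by rw [hq]; exact Equiv.swap_apply_right a b
    rw [hqa, hqb] at h4
    have h5 : (g b - g a) • (a - b) = 0 := by
      rw [show g a - g b = -(g b - g a) from (neg_sub _ _).symm, neg_smul,
        ← sub_eq_add_neg] at h4
      rw [smul_sub]
      exact h4
    rcases smul_eq_zero.1 h5 with hc | hc
    · exact (sub_eq_zero.1 hc).symm
    · exact absurd (sub_eq_zero.1 hc) hab
  by_cases hli : LinearIndependent R (fun x : {x // x ∈ X} => (x : V))
  · exact Or.inl hli
  right
  -- Extract a nontrivial relation.
  obtain ⟨g, hgsum, i, hi⟩ := Fintype.not_linearIndependent_iff.1 hli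
  -- Transfer it to a function on V.
  set G : V → R := fun z => if hz : z ∈ X then g ⟨z, hz⟩ else 0 with hG
  have hGsum : ∑ z ∈ X, G z • z = 0 := by
    rw [← Finset.sum_coe_sort X (fun z => G z • z), ← hgsum]
    refine Finset.sum_congr rfl fun z _ => ?_
    simp [hG, z.2]
  have hGconst := key G hGsum
  have hGi : G (i : V) = g i := by simp [hG, i.2]
  -- All elements sum to zero.
  have hsum0 : ∑ z ∈ X, (z : V) = 0 := by
    have hc : ∀ z ∈ X, G z = g i := fun z hz => by
      rw [← hGi]; exact hGconst z hz i i.2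
    have : ∑ z ∈ X, G z • z = g i • ∑ z ∈ X, z := by
      rw [Finset.smul_sum]
      exact Finset.sum_congr rfl fun z hz => by rw [hc z hz]
    rw [hGsum] at this
    rcases smul_eq_zero.1 this.symm with h | h
    · exact absurd h hi
    · exact h
  -- Split off one element.
  obtain ⟨x₀, hx₀⟩ : ∃ x, x ∈ X := Finset.card_pos.1 (by omega) |>.exists_mem
  set s : Finset V := X.erase x₀ with hs
  set e := s.equivFin with he
  refine ⟨s.card, fun i => ((e.symm i : s) : V), ?_, ?_⟩
  · -- Linear independence of the rest.
    rw [Fintype.linearIndependent_iff]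
    intro c hcsum j
    set C : V → R := fun z => if hz : z ∈ s then c (e ⟨z, hz⟩) else 0 with hC
    have hCx₀ : C x₀ = 0 := by simp [hC, hs]
    have hCs : ∑ z ∈ s, C z • z = 0 := by
      rw [← Finset.sum_coe_sort s (fun z => C z • z), ← hcsum,
        ← Equiv.sum_comp e.symm (fun z : s => C (z : V) • (z : V))]
      refine Finset.sum_congr rfl fun k _ => ?_
      simp [hC, (e.symm k).2]
    have hCX : ∑ z ∈ X, C z • z = 0 := by
      rw [← Finset.sum_erase_add X _ hx₀, ← hs, hCs, hCx₀, zero_smul, add_zero]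
    have hall := key C hCX
    have hj : ((e.symm j : s) : V) ∈ s := (e.symm j).2
    have : C ((e.symm j : s) : V) = 0 := by
      rw [hall _ (Finset.mem_of_mem_erase hj) x₀ hx₀, hCx₀]
    rw [hC] at this
    simpa [hj] using this
  · -- The set decomposition.
    have hrange : Set.range (fun i => ((e.symm i : s) : V)) = (s : Set V) := by
      ext z
      simp only [Set.mem_range, Finset.mem_coe]
      constructor
      · rintro ⟨j, rfl⟩; exact (e.symm j).2
      · intro hz; exact ⟨e ⟨z, hz⟩, by simp⟩
    have hsumv : ∑ i, ((e.symm i : s) : V) = -x₀ := by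
      rw [Equiv.sum_comp e.symm (fun z : s => (z : V)),
        show (∑ z : {x // x ∈ s}, (z : V)) = ∑ z ∈ s, z from
          Finset.sum_coe_sort s (fun z => z)]
      have h := Finset.sum_erase_add X (fun z => z) hx₀
      rw [hsum0] at h
      rw [hs]
      exact eq_neg_of_add_eq_zero_left h
    rw [hrange, hsumv, neg_neg]
    ext z
    simp only [Set.mem_union, Finset.mem_coe, Set.mem_singleton_iff, hs,
      Finset.mem_erase]
    constructor
    · intro hzX
      by_cases hzx : z = x₀
      · exact Or.inr hzx
      · exact Or.inl ⟨hzx, hzX⟩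
    · rintro (⟨-, hzX⟩ | rfl)
      · exact hzX
      · exact hx₀
end

section
/- Let V be a left vector space over a division ring R, let x₁, …, x_m ∈ V be linearly independent, and let x_{m+1} = −(x₁ + ⋯ + x_m). Then every permutation of the set X = {x₁, …, x_m, x_{m+1}} extends to a linear automorphism of V: for every bijection p : X → X there exists a linear automorphism u of V with u(x) = p(x) for all x ∈ X. -/
/-- **Example 1 (Pankov).** If `x₁, …, x_m` are linearly independent and
`x_{m+1} = -(x₁ + ⋯ + x_m)`, then every permutation of
`X = {x₁, …, x_m, x_{m+1}}` extends to a linear automorphism of `V`. -/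
theorem stmt_3 {R V : Type*} [DivisionRing R] [AddCommGroup V] [Module R V]
    (m : ℕ) (v : Fin m → V) (hv : LinearIndependent R v)
    (X : Set V) (hX : X = Set.range v ∪ {-(∑ i, v i)}) :
    ∀ p : X ≃ X, ∃ u : V ≃ₗ[R] V, ∀ x : X, u (x : V) = (p x : V) := by
  classical
  intro p
  set s : V := -(∑ i, v i) with hs
  -- the degenerate case: X is a subsingleton
  by_cases hsing : X.Subsingleton
  · refine ⟨LinearEquiv.refl R V, fun x => ?_⟩
    simp only [LinearEquiv.refl_apply]
    exact congrArg Subtype.val (Subtype.ext (hsing x.2 (p x).2) ▸ rfl : x = p x) ▸ rfl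
  -- main case
  · have hsnot : s ∉ Set.range v := by
      rintro ⟨j, hj⟩
      have hrel : ∑ i, (if i = j then (2:R) else 1) • v i = 0 := by
        have h1 : ∀ i, (if i = j then (2:R) else 1) • v i
            = v i + (if i = j then v i else 0) := by
          intro i
          by_cases h : i = j <;> simp [h, two_smul]
        rw [Finset.sum_congr rfl fun i _ => h1 i, Finset.sum_add_distrib,
          Finset.sum_ite_eq' Finset.univ j v]
        simp only [Finset.mem_univ, if_true]
        have h2 : v j = -(∑ i, v i) := hj.trans hs
        rw [h2]; abel
      have hall := Fintype.linearIndependent_iff.mp hv _ hrel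
      have honly : ∀ i : Fin m, i = j := by
        intro i
        by_contra h
        have := hall i
        rw [if_neg h] at this
        exact one_ne_zero this
      -- then X = {v j}, a subsingleton
      apply hsing
      intro a ha b hb
      have key : ∀ c ∈ X, c = v j := by
        intro c hc
        rw [hX] at hc
        rcases hc with ⟨i, rfl⟩ | hc
        · rw [honly i]
        · exact (Set.mem_singleton_iff.mp hc).trans hj.symm
      rw [key a ha, key b hb]
    have hvinj : Function.Injective v := hv.injective
    -- the family e : Fin (m+1) → V listing all of X
    set e : Fin (m + 1) → V := Fin.snoc v s with he
    have heinj : Function.Injective e := by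
      intro a b hab
      rcases Fin.eq_castSucc_or_eq_last a with ⟨a', rfl⟩ | rfl <;>
        rcases Fin.eq_castSucc_or_eq_last b with ⟨b', rfl⟩ | rfl
      · simp only [he, Fin.snoc_castSucc] at hab
        exact congrArg Fin.castSucc (hvinj hab)
      · simp only [he, Fin.snoc_castSucc, Fin.snoc_last] at hab
        exact absurd ⟨a', hab⟩ hsnot
      · simp only [he, Fin.snoc_castSucc, Fin.snoc_last] at hab
        exact absurd ⟨b', hab.symm⟩ hsnot
      · rfl
    have hmem : ∀ i, e i ∈ X := by
      intro i
      rcases Fin.eq_castSucc_or_eq_last i with ⟨i', rfl⟩ | rfl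
      · rw [hX]; exact Or.inl ⟨i', by simp [he]⟩
      · rw [hX]; exact Or.inr (by simp [he, hs])
    -- equivalence between Fin (m+1) and X
    have hbij : Function.Bijective (fun i => (⟨e i, hmem i⟩ : X)) := by
      constructor
      · intro a b hab
        exact heinj (congrArg Subtype.val hab)
      · rintro ⟨x, hx⟩
        rw [hX] at hx
        rcases hx with ⟨i, rfl⟩ | hx
        · exact ⟨Fin.castSucc i, Subtype.ext (by simp [he])⟩
        · have hxs : x = s := Set.mem_singleton_iff.mp hx
          exact ⟨Fin.last m, Subtype.ext (by simp [he, hxs])⟩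
    set eE : Fin (m + 1) ≃ X := Equiv.ofBijective _ hbij with heE
    have heE_apply : ∀ i, ((eE i : X) : V) = e i := fun i => rfl
    have hesum : ∑ i, e i = 0 := by
      rw [Fin.sum_univ_castSucc]
      simp [he, hs]
    -- the basis extending v
    have hv' : LinearIndepOn R id (Set.range v) := (linearIndepOn_id_range_iff hv.injective).mpr hv
    set B := Module.Basis.extend hv' with hB
    have hsub : Set.range v ⊆ hv'.extend (Set.subset_univ _) := hv'.subset_extend _
    -- the linear map associated to a permutation q
    set f : (X ≃ X) → (V →ₗ[R] V) := fun q =>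
      B.constr (S := ℕ) (fun b => if h : (b : V) ∈ X then ((q ⟨(b : V), h⟩ : X) : V) else b)
      with hf
    have hf_basis : ∀ (q : X ≃ X) (b : hv'.extend (Set.subset_univ _)),
        f q (B b) = if h : (b : V) ∈ X then ((q ⟨(b : V), h⟩ : X) : V) else b :=
      fun q b => Module.Basis.constr_basis B ℕ _ b
    have hf_v : ∀ (q : X ≃ X) (i : Fin m),
        f q (v i) = ((q ⟨v i, hX ▸ Or.inl ⟨i, rfl⟩⟩ : X) : V) := by
      intro q i
      have hmemv : v i ∈ hv'.extend (Set.subset_univ _) := hsub ⟨i, rfl⟩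
      have hbv : v i = B ⟨v i, hmemv⟩ := (Module.Basis.extend_apply_self hv' ⟨v i, hmemv⟩).symm
      conv_lhs => rw [hbv]
      rw [hf_basis q ⟨v i, hmemv⟩, dif_pos (hX ▸ Or.inl ⟨i, rfl⟩ : v i ∈ X)]
    -- key lemma: f q agrees with q on X
    have key : ∀ (q : X ≃ X) (x : X), f q (x : V) = ((q x : X) : V) := by
      intro q x
      set σ : Fin (m + 1) ≃ Fin (m + 1) := eE.trans ((q : X ≃ X).trans eE.symm) with hσ
      have hqe : ∀ i, ((q (eE i) : X) : V) = e (σ i) := by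
        intro i
        have h4 : eE (σ i) = q (eE i) := by
          simp [hσ]
        rw [← h4, heE_apply]
      have hsumσ : ∑ i, e (σ i) = 0 := by
        rw [Equiv.sum_comp σ e]
        exact hesum
      have hfs : f q s = ((q ⟨s, hX ▸ Or.inr rfl⟩ : X) : V) := by
        have h1 : f q s = -(∑ i, ((q ⟨v i, hX ▸ Or.inl ⟨i, rfl⟩⟩ : X) : V)) := by
          conv_lhs => rw [hs]
          rw [map_neg, map_sum]
          congr 1
          exact Finset.sum_congr rfl fun i _ => hf_v q i
        have h2 : ∀ i : Fin m,
            ((q ⟨v i, hX ▸ Or.inl ⟨i, rfl⟩⟩ : X) : V) = e (σ (Fin.castSucc i)) := by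
          intro i
          have h5 : eE (Fin.castSucc i) = ⟨v i, hX ▸ Or.inl ⟨i, rfl⟩⟩ :=
            Subtype.ext (by rw [heE_apply]; simp [he])
          rw [← h5, hqe]
        have h3 : eE (Fin.last m) = ⟨s, hX ▸ Or.inr rfl⟩ :=
          Subtype.ext (by rw [heE_apply]; simp [he])
        rw [h1, Finset.sum_congr rfl fun i _ => h2 i, ← h3, hqe]
        have h6 := hsumσ
        rw [Fin.sum_univ_castSucc] at h6
        have h7 : e (σ (Fin.last m)) = -(∑ i : Fin m, e (σ (Fin.castSucc i))) := by
          linear_combination (norm := abel) h6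
        rw [h7]
      -- now case on x
      obtain ⟨xv, hxv⟩ := x
      have hxv' := hxv
      rw [hX] at hxv'
      rcases hxv' with ⟨i, rfl⟩ | hxv'
      · rw [hf_v q i]
      · have hxs : xv = s := Set.mem_singleton_iff.mp hxv'
        subst hxs
        rw [hfs]
    -- the two compositions are the identity
    have hcomp : ∀ q : X ≃ X, (f q.symm).comp (f q) = LinearMap.id := by
      intro q
      apply B.ext
      intro b
      rw [LinearMap.comp_apply, LinearMap.id_apply, hf_basis q b]
      by_cases h : (b : V) ∈ X
      · rw [dif_pos h, key q.symm (q ⟨(b : V), h⟩)]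
        simp only [Equiv.symm_apply_apply]
        exact (Module.Basis.extend_apply_self hv' b).symm
      · rw [dif_neg h]
        have hbb : (b : V) = B b := (Module.Basis.extend_apply_self hv' b).symm
        rw [hbb, hf_basis q.symm b, dif_neg h, Module.Basis.extend_apply_self]
    refine ⟨LinearEquiv.ofLinear (f p) (f p.symm) ?_ ?_, fun x => key p x⟩
    · have := hcomp p.symm
      rwa [Equiv.symm_symm] at this
    · exact hcomp p
end

section
/- Let V and V' be left vector spaces over division rings R and R' with dim V = n ≥ 2 finite, and let g : V → V' be a non-trivial GL-mapping. Let V_g denote the R'-subspace of V' spanned by g(V). Then: (1) for every linear automorphism u of V there exists a unique linear automorphism ū of V_g such that g ∘ u = ū ∘ g; (2) the assignment u ↦ ū is a group homomorphism from GL(V) to GL(V_g). -/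
/-- **Lemma 1 (Pankov).** For a non-trivial GL-mapping `g : V → V'`: (1) for every
`u ∈ GL(V)` there is a unique `ubar ∈ GL(V_g)` with `g ∘ u = ubar ∘ g`, where `V_g` is the
subspace of `V'` spanned by `g(V)`; (2) `u ↦ ubar` is a group homomorphism
`GL(V) → GL(V_g)`. -/
theorem stmt_4 {R R' V V' : Type*} [DivisionRing R] [DivisionRing R']
    [AddCommGroup V] [Module R V] [AddCommGroup V'] [Module R' V']
    (n : ℕ) (hn : 2 ≤ n) [FiniteDimensional R V] (hdim : Module.finrank R V = n)
    (g : V → V')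
    (hGL : ∀ u : V ≃ₗ[R] V, ∃ u' : V' ≃ₗ[R'] V', g ∘ ⇑u = ⇑u' ∘ g)
    (hnt : ∃ x y : V, x ≠ 0 ∧ y ≠ 0 ∧ g x ≠ g y) :
    (∀ u : V ≃ₗ[R] V,
      ∃! ubar : (Submodule.span R' (Set.range g)) ≃ₗ[R'] (Submodule.span R' (Set.range g)),
        ∀ x : V, (ubar ⟨g x, Submodule.subset_span ⟨x, rfl⟩⟩ : V') = g (u x)) ∧
    (∃ Φ : (V ≃ₗ[R] V) →*
        ((Submodule.span R' (Set.range g)) ≃ₗ[R'] (Submodule.span R' (Set.range g))),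
        ∀ (u : V ≃ₗ[R] V) (x : V),
          (Φ u ⟨g x, Submodule.subset_span ⟨x, rfl⟩⟩ : V') = g (u x)) := by
  set p := Submodule.span R' (Set.range g) with hp
  -- uniqueness: two automorphisms of p agreeing on all g x are equal
  have uniq : ∀ (e₁ e₂ : p ≃ₗ[R'] p) (h : V → V'),
      (∀ x : V, (e₁ ⟨g x, Submodule.subset_span ⟨x, rfl⟩⟩ : V') = h x) →
      (∀ x : V, (e₂ ⟨g x, Submodule.subset_span ⟨x, rfl⟩⟩ : V') = h x) → e₁ = e₂ := by
    intro e₁ e₂ h h1 h2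
    have key : ∀ z ∈ p, ∀ (hz : z ∈ p), (e₁ ⟨z, hz⟩ : V') = (e₂ ⟨z, hz⟩ : V') := by
      intro z hz
      induction hz using Submodule.span_induction with
      | mem z hzr =>
        obtain ⟨x, rfl⟩ := hzr
        intro hz
        have := (h1 x).trans (h2 x).symm
        exact this
      | zero =>
        intro hz
        have : (⟨(0 : V'), hz⟩ : p) = 0 := rfl
        rw [this, map_zero, map_zero]
      | add a b ha hb iha ihb =>
        intro hz
        have : (⟨a + b, hz⟩ : p) = ⟨a, ha⟩ + ⟨b, hb⟩ := rfl
        rw [this, map_add, map_add]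
        push_cast
        rw [iha ha, ihb hb]
      | smul c a ha iha =>
        intro hz
        have : (⟨c • a, hz⟩ : p) = c • ⟨a, ha⟩ := rfl
        rw [this, map_smul, map_smul]
        push_cast
        rw [iha ha]
    ext z
    obtain ⟨z, hz⟩ := z
    exact key z hz hz
  -- existence
  have exist : ∀ u : V ≃ₗ[R] V, ∃ ubar : p ≃ₗ[R'] p,
      ∀ x : V, (ubar ⟨g x, Submodule.subset_span ⟨x, rfl⟩⟩ : V') = g (u x) := by
    intro u
    obtain ⟨u', hu'⟩ := hGL u
    have hrange : ⇑u' '' Set.range g = Set.range g := by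
      rw [← Set.range_comp, ← hu', Set.range_comp g u, u.surjective.range_eq, Set.image_univ]
    have hmap : p.map (u' : V' →ₗ[R'] V') = p := by
      rw [hp, Submodule.map_span]
      simp only [LinearEquiv.coe_coe]
      rw [hrange]
    refine ⟨(u'.submoduleMap p).trans (LinearEquiv.ofEq _ _ hmap), fun x => ?_⟩
    have : u' (g x) = g (u x) := (congrFun hu' x).symm
    exact this
  choose Φ₀ hΦ₀ using exist
  constructor
  · intro u
    exact ⟨Φ₀ u, hΦ₀ u, fun e he => uniq e (Φ₀ u) (fun x => g (u x)) he (hΦ₀ u)⟩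
  · refine ⟨{ toFun := Φ₀, map_one' := ?_, map_mul' := ?_ }, hΦ₀⟩
    · refine uniq (Φ₀ 1) (LinearEquiv.refl R' p) g (fun x => ?_) (fun x => rfl)
      simpa using hΦ₀ 1 x
    · intro u v
      refine uniq (Φ₀ (u * v)) (Φ₀ u * Φ₀ v) (fun x => g (u (v x)))
        (fun x => by simpa using hΦ₀ (u * v) x) (fun x => ?_)
      have hv : Φ₀ v ⟨g x, Submodule.subset_span ⟨x, rfl⟩⟩
          = ⟨g (v x), Submodule.subset_span ⟨v x, rfl⟩⟩ := Subtype.ext (hΦ₀ v x)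
      show ((Φ₀ u) ((Φ₀ v) ⟨g x, Submodule.subset_span ⟨x, rfl⟩⟩) : V') = g (u (v x))
      rw [hv]
      exact hΦ₀ u (v x)
end

section
/- Let V and V' be left vector spaces over division rings R and R' with dim V = n ≥ 2 finite, and let g : V → V' be a non-trivial GL-mapping. If x, y ∈ V \ {0} are linearly independent, then g(x) ≠ g(y). -/
open Module Submodule Set

/-- GL acts transitively on linearly independent pairs. -/
theorem aux_exists_equiv {R V : Type*} [DivisionRing R] [AddCommGroup V] [Module R V]
    [FiniteDimensional R V] (a b c d : V)
    (hab : LinearIndependent R ![a, b]) (hcd : LinearIndependent R ![c, d]) :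
    ∃ u : V ≃ₗ[R] V, u a = c ∧ u b = d := by
  set W : Submodule R V := span R (Set.range ![a, b]) with hW
  set W' : Submodule R V := span R (Set.range ![c, d]) with hW'
  obtain ⟨Q, hQ⟩ := W.exists_isCompl
  obtain ⟨Q', hQ'⟩ := W'.exists_isCompl
  have hfW : finrank R W = 2 := by
    rw [hW, finrank_span_eq_card hab]; simp
  have hfW' : finrank R W' = 2 := by
    rw [hW', finrank_span_eq_card hcd]; simp
  have h1 := Submodule.finrank_add_eq_of_isCompl hQ
  have h2 := Submodule.finrank_add_eq_of_isCompl hQ'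
  have hfQ : finrank R Q = finrank R Q' := by omega
  let e : W ≃ₗ[R] W' := (Basis.span hab).equiv (Basis.span hcd) (Equiv.refl _)
  let f : Q ≃ₗ[R] Q' := LinearEquiv.ofFinrankEq _ _ hfQ
  let P : (W × Q) ≃ₗ[R] V := prodEquivOfIsCompl W Q hQ
  let P' : (W' × Q') ≃ₗ[R] V := prodEquivOfIsCompl W' Q' hQ'
  let E : (W × Q) ≃ₗ[R] (W' × Q') := LinearEquiv.prodCongr e f
  refine ⟨P.symm.trans (E.trans P'), ?_, ?_⟩
  · have haW : a ∈ W := subset_span ⟨0, rfl⟩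
    have ha : (⟨a, haW⟩ : W) = Basis.span hab 0 := (Basis.span_apply hab 0).symm
    have : (P.symm a) = ((⟨a, haW⟩ : W), (0 : Q)) :=
      prodEquivOfIsCompl_symm_apply_left (p := W) (q := Q) hQ ⟨a, haW⟩
    simp only [LinearEquiv.trans_apply, this, LinearEquiv.prodCongr_apply, Prod.map,
      map_zero, coe_prodEquivOfIsCompl']
    rw [ha]
    simp only [P', E, e, LinearEquiv.prodCongr_apply, map_zero, Basis.equiv_apply, Equiv.refl_apply, coe_prodEquivOfIsCompl',
      ZeroMemClass.coe_zero, add_zero]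
    exact congrArg Subtype.val (Basis.span_apply hcd 0)
  · have hbW : b ∈ W := subset_span ⟨1, rfl⟩
    have hb : (⟨b, hbW⟩ : W) = Basis.span hab 1 := (Basis.span_apply hab 1).symm
    have : (P.symm b) = ((⟨b, hbW⟩ : W), (0 : Q)) :=
      prodEquivOfIsCompl_symm_apply_left (p := W) (q := Q) hQ ⟨b, hbW⟩
    simp only [LinearEquiv.trans_apply, this, LinearEquiv.prodCongr_apply, Prod.map,
      map_zero, coe_prodEquivOfIsCompl']
    rw [hb]
    simp only [P', E, e, LinearEquiv.prodCongr_apply, map_zero, Basis.equiv_apply, Equiv.refl_apply, coe_prodEquivOfIsCompl',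
      ZeroMemClass.coe_zero, add_zero]
    exact congrArg Subtype.val (Basis.span_apply hcd 1)

/-- **Lemma 2 (Pankov).** A non-trivial GL-mapping takes distinct values on linearly
independent nonzero vectors. -/
theorem stmt_5 {R R' V V' : Type*} [DivisionRing R] [DivisionRing R']
    [AddCommGroup V] [Module R V] [AddCommGroup V'] [Module R' V']
    (n : ℕ) (hn : 2 ≤ n) [FiniteDimensional R V] (hdim : Module.finrank R V = n)
    (g : V → V')
    (hGL : ∀ u : V ≃ₗ[R] V, ∃ u' : V' ≃ₗ[R'] V', g ∘ ⇑u = ⇑u' ∘ g)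
    (hnt : ∃ x y : V, x ≠ 0 ∧ y ≠ 0 ∧ g x ≠ g y)
    (x y : V) (hx : x ≠ 0) (hy : y ≠ 0)
    (hxy : LinearIndependent R ![x, y]) :
    g x ≠ g y := by
  intro h
  obtain ⟨p, q, hp, hq, hpq⟩ := hnt
  -- key: g takes equal values on any linearly independent pair
  have key : ∀ a b : V, LinearIndependent R ![a, b] → g a = g b := by
    intro a b hab
    obtain ⟨u, hua, hub⟩ := aux_exists_equiv x y a b hxy hab
    obtain ⟨u', hu'⟩ := hGL u
    have h1 : g a = u' (g x) := by rw [← hua]; exact congrFun hu' x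
    have h2 : g b = u' (g y) := by rw [← hub]; exact congrFun hu' y
    rw [h1, h2, h]
  -- extend to all nonzero vectors
  have key2 : ∀ a b : V, a ≠ 0 → b ≠ 0 → g a = g b := by
    intro a b ha hb
    by_cases hab : LinearIndependent R ![a, b]
    · exact key a b hab
    · -- b is a multiple of a; pick c outside span of b
      rw [linearIndependent_fin2] at hab
      push_neg at hab
      obtain ⟨s, hs⟩ := hab hb
      have hspan : Submodule.span R {b} ≠ ⊤ := by
        intro htop
        have h1 := finrank_span_singleton (K := R) hb
        rw [htop, finrank_top] at h1
        omega
      obtain ⟨c, hc⟩ : ∃ c, c ∉ Submodule.span R {b} := by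
        by_contra hcon
        push_neg at hcon
        exact hspan (Submodule.eq_top_iff'.mpr hcon)
      have hc0 : c ≠ 0 := fun h0 => hc (h0 ▸ Submodule.zero_mem _)
      have hbc : LinearIndependent R ![b, c] := by
        rw [linearIndependent_fin2]
        refine ⟨hc0, fun t ht => ?_⟩
        apply hc
        simp only [Matrix.cons_val_one, Matrix.head_cons, Matrix.cons_val_zero] at ht
        have hbne : b = t • c := ht.symm
        rcases eq_or_ne t 0 with rfl | htne
        · simp at hbne; exact absurd hbne hb
        · have : c = t⁻¹ • b := by rw [hbne, smul_smul, inv_mul_cancel₀ htne, one_smul]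
          rw [this]
          exact Submodule.smul_mem _ _ (Submodule.mem_span_singleton_self b)
      have hac : LinearIndependent R ![a, c] := by
        rw [linearIndependent_fin2]
        refine ⟨hc0, fun t ht => ?_⟩
        apply hc
        simp only [Matrix.cons_val_one, Matrix.head_cons, Matrix.cons_val_zero] at ht
        simp only [Matrix.cons_val_one, Matrix.head_cons, Matrix.cons_val_zero] at hs
        have htne : t ≠ 0 := by rintro rfl; simp at ht; exact ha ht.symm
        have : c = t⁻¹ • a := by rw [← ht, smul_smul, inv_mul_cancel₀ htne, one_smul]
        rw [this, ← hs, smul_smul]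
        exact Submodule.smul_mem _ _ (Submodule.mem_span_singleton_self b)
      rw [key a c hac, key b c hbc]
  exact hpq (key2 p q hp hq)
end

section
/- Let V and V' be left vector spaces over division rings R and R' with dim V = n ≥ 2 finite, and let g : V → V' be a non-trivial GL-mapping. Let u be a linear automorphism of V and u' a linear automorphism of V' with g ∘ u = u' ∘ g. If u' fixes every vector of g(V) (equivalently g ∘ u = g), then there exists a scalar a ∈ R, a ≠ 0, such that u(x) = a•x for all x ∈ V; i.e., u is the identity or a homothety. -/
open Submodule Module

/-- symmetry of pair independence -/
private lemma pair_symm_aux {R V : Type*} [DivisionRing R] [AddCommGroup V] [Module R V]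
    {x y : V} (h : LinearIndependent R ![x, y]) : LinearIndependent R ![y, x] := by
  rw [LinearIndependent.pair_iff] at h ⊢
  intro s t hst
  obtain ⟨h1, h2⟩ := h t s (by rw [add_comm]; exact hst)
  exact ⟨h2, h1⟩

/-- GL is transitive on ordered linearly independent pairs. -/
private lemma exists_equiv_pair {R V : Type*} [DivisionRing R] [AddCommGroup V] [Module R V]
    [FiniteDimensional R V] {x x' y z : V}
    (h1 : LinearIndependent R ![x, x']) (h2 : LinearIndependent R ![y, z]) :
    ∃ w : V ≃ₗ[R] V, w x = y ∧ w x' = z := by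
  set p := Submodule.span R (Set.range ![x, x']) with hp
  set q := Submodule.span R (Set.range ![y, z]) with hq
  obtain ⟨p', hp'⟩ := p.exists_isCompl
  obtain ⟨q', hq'⟩ := q.exists_isCompl
  let b1 : Basis (Fin 2) R p := Basis.span h1
  let b2 : Basis (Fin 2) R q := Basis.span h2
  let e0 : p ≃ₗ[R] q := b1.equiv b2 (Equiv.refl _)
  have hpd : finrank R p = 2 := by
    rw [hp, finrank_span_eq_card h1, Fintype.card_fin]
  have hqd : finrank R q = 2 := by
    rw [hq, finrank_span_eq_card h2, Fintype.card_fin]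
  have hc1 := Submodule.finrank_add_eq_of_isCompl hp'
  have hc2 := Submodule.finrank_add_eq_of_isCompl hq'
  have hdim : finrank R p' = finrank R q' := by omega
  obtain ⟨e1⟩ := FiniteDimensional.nonempty_linearEquiv_of_finrank_eq hdim
  refine ⟨((Submodule.prodEquivOfIsCompl p p' hp').symm.trans ((e0.prodCongr e1).trans
      (Submodule.prodEquivOfIsCompl q q' hq'))), ?_, ?_⟩
  · have hb : (b1 0 : V) = x := congrArg Subtype.val (Basis.span_apply h1 0)
    have hx : (Submodule.prodEquivOfIsCompl p p' hp').symm x = (b1 0, 0) := by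
      rw [← hb]
      exact Submodule.prodEquivOfIsCompl_symm_apply_left p p' hp' (b1 0)
    simp only [LinearEquiv.trans_apply, hx, LinearEquiv.prodCongr_apply, map_zero]
    have he0 : e0 (b1 0) = b2 0 := Basis.equiv_apply b1 0 b2 (Equiv.refl _)
    rw [he0, Submodule.coe_prodEquivOfIsCompl' q q' hq']
    have : (b2 0 : V) = y := congrArg Subtype.val (Basis.span_apply h2 0)
    simp [this]
  · have hb : (b1 1 : V) = x' := congrArg Subtype.val (Basis.span_apply h1 1)
    have hx : (Submodule.prodEquivOfIsCompl p p' hp').symm x' = (b1 1, 0) := by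
      rw [← hb]
      exact Submodule.prodEquivOfIsCompl_symm_apply_left p p' hp' (b1 1)
    simp only [LinearEquiv.trans_apply, hx, LinearEquiv.prodCongr_apply, map_zero]
    have he0 : e0 (b1 1) = b2 1 := Basis.equiv_apply b1 1 b2 (Equiv.refl _)
    rw [he0, Submodule.coe_prodEquivOfIsCompl' q q' hq']
    have : (b2 1 : V) = z := congrArg Subtype.val (Basis.span_apply h2 1)
    simp [this]

/-- **Lemma 4 (Pankov).** If `g` is a non-trivial GL-mapping, `g ∘ u = u' ∘ g` and `u'`
fixes every vector of `g(V)` (i.e. `g ∘ u = g`), then `u` is the identity or a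
homothety: `u x = a • x` for some nonzero scalar `a` and all `x`. -/
theorem stmt_8 {R R' V V' : Type*} [DivisionRing R] [DivisionRing R']
    [AddCommGroup V] [Module R V] [AddCommGroup V'] [Module R' V']
    (n : ℕ) (hn : 2 ≤ n) [FiniteDimensional R V] (hdim : Module.finrank R V = n)
    (g : V → V')
    (hGL : ∀ u : V ≃ₗ[R] V, ∃ u' : V' ≃ₗ[R'] V', g ∘ ⇑u = ⇑u' ∘ g)
    (hnt : ∃ x y : V, x ≠ 0 ∧ y ≠ 0 ∧ g x ≠ g y)
    (u : V ≃ₗ[R] V) (u' : V' ≃ₗ[R'] V')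
    (hcomm : g ∘ ⇑u = ⇑u' ∘ g)
    (hfix : ∀ x : V, u' (g x) = g x) :
    ∃ a : R, a ≠ 0 ∧ ∀ x : V, u x = a • x := by
  -- g ∘ u = g
  have hgu : ∀ x : V, g (u x) = g x := by
    intro x
    have := congrFun hcomm x
    simp only [Function.comp_apply] at this
    rw [this, hfix]
  -- spans of single vectors are proper
  have hspan_ne_top : ∀ v : V, v ≠ 0 → Submodule.span R {v} ≠ ⊤ := by
    intro v hv htop
    have h1 : finrank R (Submodule.span R {v}) = 1 := finrank_span_singleton hv
    rw [htop, finrank_top] at h1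
    omega
  by_cases hsc : ∀ x : V, u x ∈ Submodule.span R {x}
  · -- u is scalar.  First: equal coefficients on independent pairs
    have samecoeff : ∀ (y z : V) (b c : R), LinearIndependent R ![y, z] →
        b • y = u y → c • z = u z → b = c := by
      intro y z b c hind hb hc
      obtain ⟨d, hd⟩ := Submodule.mem_span_singleton.mp (hsc (y + z))
      have hsum : b • y + c • z = d • y + d • z := by
        rw [hb, hc, ← map_add, ← hd, smul_add]
      have h0 : (b - d) • y + (c - d) • z = 0 := by
        rw [sub_smul, sub_smul]
        rw [show b • y - d • y + (c • z - d • z)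
            = (b • y + c • z) - (d • y + d • z) by abel, hsum, sub_self]
      obtain ⟨h1, h2⟩ := hind.eq_zero_of_pair h0
      rw [sub_eq_zero] at h1 h2
      rw [h1, h2]
    obtain ⟨x₀, y₀, hx₀, hy₀, hgxy⟩ := hnt
    obtain ⟨a, ha⟩ := Submodule.mem_span_singleton.mp (hsc x₀)
    have ha0 : a ≠ 0 := by
      rintro rfl
      rw [zero_smul] at ha
      exact hx₀ (u.map_eq_zero_iff.mp ha.symm)
    refine ⟨a, ha0, ?_⟩
    intro x
    rcases eq_or_ne x 0 with rfl | hx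
    · simp
    obtain ⟨b, hb⟩ := Submodule.mem_span_singleton.mp (hsc x)
    by_cases hind : LinearIndependent R ![x₀, x]
    · rw [← hb, samecoeff x₀ x a b hind ha hb]
    · -- x ∈ span {x₀}; use an auxiliary vector t outside span {x₀}
      have hxx₀ : x ∈ Submodule.span R {x₀} := by
        rw [LinearIndependent.pair_iff' hx₀] at hind
        push_neg at hind
        obtain ⟨c, hc⟩ := hind
        exact hc ▸ Submodule.smul_mem _ c (Submodule.mem_span_singleton_self x₀)
      obtain ⟨t, ht⟩ : ∃ t : V, t ∉ Submodule.span R {x₀} := by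
        by_contra h
        push_neg at h
        exact hspan_ne_top x₀ hx₀ (Submodule.eq_top_iff'.mpr h)
      obtain ⟨c, hc⟩ := Submodule.mem_span_singleton.mp (hsc t)
      have h1 : LinearIndependent R ![x₀, t] := by
        rw [LinearIndependent.pair_iff' hx₀]
        intro d hd
        exact ht (hd ▸ Submodule.smul_mem _ d (Submodule.mem_span_singleton_self x₀))
      have h2 : LinearIndependent R ![x, t] := by
        rw [LinearIndependent.pair_iff' hx]
        intro d hd
        exact ht (hd ▸ Submodule.smul_mem _ d hxx₀)
      have hac : a = c := samecoeff x₀ t a c h1 ha hc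
      have hbc : b = c := samecoeff x t b c h2 hb hc
      rw [← hb, hbc, ← hac]
  · -- u not scalar: g is constant on nonzero vectors, contradicting non-triviality
    push_neg at hsc
    obtain ⟨x₀, hx₀⟩ := hsc
    have hx₀0 : x₀ ≠ 0 := by
      rintro rfl
      exact hx₀ (by simp)
    have hind : LinearIndependent R ![u x₀, x₀] := by
      apply pair_symm_aux
      rw [LinearIndependent.pair_iff' hx₀0]
      intro c hc
      exact hx₀ (Submodule.mem_span_singleton.mpr ⟨c, hc⟩)
    -- key: g identifies independent pairs
    have gkey : ∀ y z : V, LinearIndependent R ![y, z] → g y = g z := by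
      intro y z h2
      obtain ⟨w, hw1, hw2⟩ := exists_equiv_pair hind h2
      obtain ⟨w', hw'⟩ := hGL w
      have e1 : g (w (u x₀)) = w' (g (u x₀)) := congrFun hw' (u x₀)
      have e2 : g (w x₀) = w' (g x₀) := congrFun hw' x₀
      rw [hw1] at e1
      rw [hw2] at e2
      rw [e1, e2, hgu x₀]
    -- hence g is constant on nonzero vectors
    have gconst : ∀ y z : V, y ≠ 0 → z ≠ 0 → g y = g z := by
      intro y z hy hz
      by_cases hind2 : LinearIndependent R ![y, z]
      · exact gkey y z hind2
      · have hzy : z ∈ Submodule.span R {y} := by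
          rw [LinearIndependent.pair_iff' hy] at hind2
          push_neg at hind2
          obtain ⟨c, hc⟩ := hind2
          rw [← hc]
          exact Submodule.smul_mem _ c (Submodule.mem_span_singleton_self y)
        obtain ⟨t, ht⟩ : ∃ t : V, t ∉ Submodule.span R {y} := by
          by_contra h
          push_neg at h
          exact hspan_ne_top y hy (Submodule.eq_top_iff'.mpr h)
        have h1 : LinearIndependent R ![y, t] := by
          rw [LinearIndependent.pair_iff' hy]
          intro d hd
          exact ht (hd ▸ Submodule.smul_mem _ d (Submodule.mem_span_singleton_self y))
        have h2 : LinearIndependent R ![z, t] := by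
          rw [LinearIndependent.pair_iff' hz]
          intro d hd
          exact ht (hd ▸ Submodule.smul_mem _ d hzy)
        rw [gkey y t h1, gkey z t h2]
    obtain ⟨x, y, hx, hy, hxy⟩ := hnt
    exact absurd (gconst x y hx hy) hxy
end

section
/- Let V and V' be left vector spaces over division rings R and R' with dim V = n ≥ 2 finite, and let g : V → V' be a non-trivial GL-mapping. Then g(x) ≠ 0 for every x ∈ V \ {0}, and g transfers any n−1 linearly independent vectors of V to n−1 linearly independent vectors of V': for every family v : Fin (n−1) → V of linearly independent vectors, the family g ∘ v is linearly independent over R'. -/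
open Module

section AuxGL

variable {R V : Type*} [DivisionRing R] [AddCommGroup V] [Module R V]

/-- Extend a linearly independent family of `k ≤ n` vectors to a basis indexed by `Fin n`. -/
lemma extend_to_basis_aux [FiniteDimensional R V] {n : ℕ} (hdim : finrank R V = n) (hn : 0 < n) :
    ∀ d k (hkd : k + d = n) (v : Fin k → V) (hv : LinearIndependent R v),
      ∃ b : Basis (Fin n) R V, ∀ i : Fin k, b (Fin.castLE (by omega) i) = v i := by
  intro d
  induction d with
  | zero =>
    intro k hkd v hv
    subst hkd
    have : Nonempty (Fin (k + 0)) := ⟨⟨0, by omega⟩⟩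
    refine ⟨basisOfLinearIndependentOfCardEqFinrank hv (by simp [hdim]), fun i => ?_⟩
    have h1 : Fin.castLE (by omega) i = i := by ext; simp
    rw [h1, coe_basisOfLinearIndependentOfCardEqFinrank]
  | succ d ih =>
    intro k hkd v hv
    obtain ⟨x, hx⟩ := exists_linearIndependent_snoc_of_lt_finrank hv (by omega)
    obtain ⟨b, hb⟩ := ih (k + 1) (by omega) (Fin.snoc v x) hx
    refine ⟨b, fun i => ?_⟩
    have h1 : Fin.castLE (show k ≤ n by omega) i
        = Fin.castLE (show k + 1 ≤ n by omega) (Fin.castSucc i) := by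
      ext; simp
    rw [h1, hb (Fin.castSucc i), Fin.snoc_castSucc]

lemma extend_to_basis [FiniteDimensional R V] {n k : ℕ} (hdim : finrank R V = n) (hn : 0 < n)
    (hk : k ≤ n) (v : Fin k → V) (hv : LinearIndependent R v) :
    ∃ b : Basis (Fin n) R V, ∀ i : Fin k, b (Fin.castLE hk i) = v i :=
  extend_to_basis_aux hdim hn (n - k) k (by omega) v hv

/-- Transitivity of GL on linearly independent tuples. -/
lemma exists_glequiv [FiniteDimensional R V] {n k : ℕ} (hdim : finrank R V = n) (hn : 0 < n)
    (hk : k ≤ n) (v w : Fin k → V) (hv : LinearIndependent R v) (hw : LinearIndependent R w) :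
    ∃ u : V ≃ₗ[R] V, ∀ i, u (v i) = w i := by
  obtain ⟨b, hb⟩ := extend_to_basis hdim hn hk v hv
  obtain ⟨c, hc⟩ := extend_to_basis hdim hn hk w hw
  refine ⟨b.equiv c (Equiv.refl _), fun i => ?_⟩
  rw [← hb i, Basis.equiv_apply, Equiv.refl_apply, hc i]

lemma pair_add_li {p q : V} (h : LinearIndependent R ![p, q]) :
    LinearIndependent R ![p, p + q] := by
  rw [Fintype.linearIndependent_iff] at h ⊢
  intro c hc
  have h2 : (c 0 + c 1) • p + c 1 • q = 0 := by
    have := hc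
    simp only [Fin.sum_univ_two, Matrix.cons_val_zero, Matrix.cons_val_one, Matrix.head_cons]
      at this
    rw [add_smul]
    rw [smul_add] at this
    abel_nf
    abel_nf at this
    exact this
  have h3 := h ![c 0 + c 1, c 1] (by simpa [Fin.sum_univ_two] using h2)
  have h30 := h3 0
  have h31 := h3 1
  simp only [Matrix.cons_val_zero, Matrix.cons_val_one, Matrix.head_cons] at h30 h31
  intro i
  fin_cases i
  · simpa using by rw [h31, add_zero] at h30; exact h30
  · simpa using h31

lemma pair_of_basis {n : ℕ} (b : Basis (Fin n) R V) {i j : Fin n} (hij : i ≠ j) :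
    LinearIndependent R ![b i, b j] := by
  have hinj : Function.Injective ![i, j] := by
    intro x y hxy
    fin_cases x <;> fin_cases y <;> simp_all
  have := b.linearIndependent.comp ![i, j] hinj
  have heq : (⇑b ∘ ![i, j]) = ![b i, b j] := by
    funext x; fin_cases x <;> simp
  rwa [heq] at this

end AuxGL

set_option maxHeartbeats 1000000 in
/-- **Lemma 5 (Pankov).** A non-trivial GL-mapping `g : V → V'` (with `dim V = n ≥ 2`)
satisfies `g(x) ≠ 0` for all `x ≠ 0` and sends any `n−1` linearly independent vectors
to linearly independent vectors. -/
theorem stmt_9 {R R' V V' : Type*} [DivisionRing R] [DivisionRing R']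
    [AddCommGroup V] [Module R V] [AddCommGroup V'] [Module R' V']
    (n : ℕ) (hn : 2 ≤ n) [FiniteDimensional R V] (hdim : Module.finrank R V = n)
    (g : V → V')
    (hGL : ∀ u : V ≃ₗ[R] V, ∃ u' : V' ≃ₗ[R'] V', g ∘ ⇑u = ⇑u' ∘ g)
    (hnt : ∃ x y : V, x ≠ 0 ∧ y ≠ 0 ∧ g x ≠ g y) :
    (∀ x : V, x ≠ 0 → g x ≠ 0) ∧
    (∀ v : Fin (n - 1) → V, LinearIndependent R v → LinearIndependent R' (g ∘ v)) := by
  have hn0 : 0 < n := by omega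
  obtain ⟨x₀, y₀, hx₀, hy₀, hg₀⟩ := hnt
  -- Transitivity on nonzero vectors
  have transv : ∀ p q : V, p ≠ 0 → q ≠ 0 → ∃ u : V ≃ₗ[R] V, u p = q := by
    intro p q hp hq
    obtain ⟨u, hu⟩ := exists_glequiv hdim hn0 (show 1 ≤ n by omega) ![p] ![q]
      (linearIndependent_unique_iff.mpr (by simpa)) (linearIndependent_unique_iff.mpr (by simpa))
    exact ⟨u, by simpa using hu 0⟩
  -- Part 1
  have part1 : ∀ x : V, x ≠ 0 → g x ≠ 0 := by
    intro x hx hgx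
    have key : ∀ y : V, y ≠ 0 → g y = 0 := by
      intro y hy
      obtain ⟨u, hu⟩ := transv x y hx hy
      obtain ⟨u', hu'⟩ := hGL u
      have := congrFun hu' x
      simp only [Function.comp_apply, hu] at this
      rw [this, hgx, map_zero]
    exact hg₀ (by rw [key x₀ hx₀, key y₀ hy₀])
  refine ⟨part1, ?_⟩
  intro v hv
  by_contra hdep
  obtain ⟨a, hsum, j, hj⟩ := Fintype.not_linearIndependent_iff.mp hdep
  simp only [Function.comp_apply] at hsum
  -- extend v to a basis b of V
  obtain ⟨b, hb⟩ := extend_to_basis hdim hn0 (Nat.sub_le n 1) v hv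
  set ln : Fin n := ⟨n - 1, by omega⟩ with hln
  set cj : Fin n := Fin.castLE (Nat.sub_le n 1) j with hcj
  have hcjln : cj ≠ ln := by
    have := j.isLt
    intro h
    rw [Fin.ext_iff] at h
    simp [hcj, hln] at h
    omega
  -- the transvection u : x ↦ x + (coord of x at cj) • b ln
  set f : V →ₗ[R] V := (b.coord cj).smulRight (b ln) with hf
  have hfb : ∀ i : Fin n, f (b i) = if i = cj then b ln else 0 := by
    intro i
    simp only [hf, LinearMap.smulRight_apply, Basis.coord_apply, Basis.repr_self]
    rw [Finsupp.single_apply]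
    split <;> simp
  have hff : ∀ x, f (f x) = 0 := by
    intro x
    have : f x = (b.coord cj x) • b ln := by simp [hf]
    rw [this, map_smul, hfb ln, if_neg (Ne.symm hcjln), smul_zero]
  set u : V ≃ₗ[R] V := LinearEquiv.ofLinear (LinearMap.id + f) (LinearMap.id - f)
    (by ext z; simp [map_sub, hff]) (by ext z; simp [map_add, hff]) with hu
  have hu_apply : ∀ z, u z = z + f z := fun z => rfl
  obtain ⟨u', hu'⟩ := hGL u
  have hval : ∀ i, g (u (v i)) = u' (g (v i)) := fun i => congrFun hu' (v i)
  have huvj : u (v j) = v j + b ln := by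
    rw [hu_apply, ← hb j, ← hcj, hfb cj, if_pos rfl]
  have huvi : ∀ i, i ≠ j → u (v i) = v i := by
    intro i hij
    have hne : Fin.castLE (Nat.sub_le n 1) i ≠ cj := by
      rw [hcj]
      intro h
      exact hij (Fin.castLE_injective _ h)
    rw [hu_apply, ← hb i, hfb _, if_neg hne, add_zero]
  -- the transported relation
  have S2 : ∑ i, a i • g (u (v i)) = 0 := by
    have : ∑ i, a i • g (u (v i)) = u' (∑ i, a i • g (v i)) := by
      rw [map_sum]
      exact Finset.sum_congr rfl fun i _ => by rw [hval i, map_smul]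
    rw [this, hsum, map_zero]
  have e1 : a j • g (u (v j)) + ∑ i ∈ Finset.univ.erase j, a i • g (u (v i)) = 0 :=
    (Finset.add_sum_erase Finset.univ (fun i => a i • g (u (v i)))
      (Finset.mem_univ j)).trans S2
  have e2 : a j • g (v j) + ∑ i ∈ Finset.univ.erase j, a i • g (v i) = 0 :=
    (Finset.add_sum_erase Finset.univ (fun i => a i • g (v i))
      (Finset.mem_univ j)).trans hsum
  have e3 : ∑ i ∈ Finset.univ.erase j, a i • g (u (v i))
      = ∑ i ∈ Finset.univ.erase j, a i • g (v i) :=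
    Finset.sum_congr rfl fun i hi => by rw [huvi i (Finset.ne_of_mem_erase hi)]
  have e4 : a j • g (u (v j)) = a j • g (v j) := by
    have := e1
    rw [e3] at this
    have h5 := this.trans e2.symm
    exact add_right_cancel h5
  have gEq : g (v j + b ln) = g (v j) := by
    rw [huvj] at e4
    exact smul_right_injective V' hj e4
  -- the distinguished linearly independent pair with equal g-values
  have hpair : LinearIndependent R ![v j, v j + b ln] := by
    have := pair_add_li (pair_of_basis b hcjln)
    rwa [hb j] at this
  -- all linearly independent pairs have equal g-values
  have key : ∀ p q : V, LinearIndependent R ![p, q] → g p = g q := by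
    intro p q hpq
    obtain ⟨u₂, hu₂⟩ := exists_glequiv hdim hn0 hn ![v j, v j + b ln] ![p, q] hpair hpq
    obtain ⟨u₂', hu₂'⟩ := hGL u₂
    have h0 := congrFun hu₂' (v j)
    have h1 := congrFun hu₂' (v j + b ln)
    simp only [Function.comp_apply] at h0 h1
    have e0 : u₂ (v j) = p := by simpa using hu₂ 0
    have e1' : u₂ (v j + b ln) = q := by simpa using hu₂ 1
    rw [e0] at h0
    rw [e1'] at h1
    rw [h0, h1, gEq]
  -- g is constant on nonzero vectors
  have const : ∀ p q : V, p ≠ 0 → q ≠ 0 → g p = g q := by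
    intro p q hp hq
    -- find r with both ![p, r] and ![q, r] linearly independent
    obtain ⟨b2, hb2⟩ := extend_to_basis hdim hn0 (show 1 ≤ n by omega) ![p]
      (linearIndependent_unique_iff.mpr (by simpa))
    set i0 : Fin n := Fin.castLE (show 1 ≤ n by omega) (0 : Fin 1) with hi0
    set i1 : Fin n := ⟨1, by omega⟩ with hi1
    have hi01 : i0 ≠ i1 := by
      intro h
      rw [Fin.ext_iff] at h
      simp [hi0, hi1] at h
    set r : V := b2 i1 with hr
    have hpb : b2 i0 = p := by simpa using hb2 0
    have hpr : LinearIndependent R ![p, r] := by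
      have := pair_of_basis b2 hi01
      rwa [hpb] at this
    by_cases hcase : LinearIndependent R ![p, q]
    · exact key p q hcase
    · -- q is a nonzero multiple of p
      obtain ⟨c, hc, i, hci⟩ := Fintype.not_linearIndependent_iff.mp hcase
      simp only [Fin.sum_univ_two, Matrix.cons_val_zero, Matrix.cons_val_one,
        Matrix.head_cons] at hc
      have hc1 : c 1 ≠ 0 := by
        intro h1
        rw [h1, zero_smul, add_zero] at hc
        have hc0 : c 0 ≠ 0 := by
          fin_cases i
          · exact hci
          · exact absurd h1 hci
        exact hp (smul_right_injective V hc0 (by simpa using hc))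
      have hq_eq : q = (-((c 1)⁻¹ * c 0)) • p := by
        have : c 1 • q = -(c 0 • p) := eq_neg_of_add_eq_zero_left (by
          rw [add_comm] at hc; exact hc)
        have h2 : q = (c 1)⁻¹ • (-(c 0 • p)) := by
          rw [← this, ← smul_assoc, smul_eq_mul, inv_mul_cancel₀ hc1, one_smul]
        rw [h2]
        rw [smul_neg, neg_smul, ← smul_assoc, smul_eq_mul]
      set s : R := -((c 1)⁻¹ * c 0) with hs
      have hs0 : s ≠ 0 := by
        intro h
        rw [h, zero_smul] at hq_eq
        exact hq hq_eq
      have hqr : LinearIndependent R ![q, r] := by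
        rw [Fintype.linearIndependent_iff] at hpr ⊢
        intro t ht
        simp only [Fin.sum_univ_two, Matrix.cons_val_zero, Matrix.cons_val_one,
          Matrix.head_cons] at ht
        rw [hq_eq, ← smul_assoc, smul_eq_mul] at ht
        have := hpr ![t 0 * s, t 1] (by simpa [Fin.sum_univ_two] using ht)
        have h30 := this 0
        have h31 := this 1
        simp only [Matrix.cons_val_zero, Matrix.cons_val_one, Matrix.head_cons] at h30 h31
        intro i'
        fin_cases i'
        · simpa using (mul_eq_zero.mp h30).resolve_right hs0
        · simpa using h31
      rw [key p r hpr, key q r hqr]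
  exact absurd (const x₀ y₀ hx₀ hy₀) hg₀
end

section
/- Let V and V' be left vector spaces over division rings R and R' with dim V = n ≥ 2 finite, and let g : V → V' be a non-trivial GL-mapping such that the R'-subspace V_g spanned by g(V) has dimension at most n. Then dim V_g = n, and for every (n−1)-dimensional subspace S ⊆ V, the R'-subspace of V' spanned by g(S) has dimension exactly n−1. -/
open Module Submodule

section Aux

variable {R V : Type*} [DivisionRing R] [AddCommGroup V] [Module R V]

/-- Any linear equivalence between two submodules of a finite-dimensional space
extends to an automorphism of the whole space. -/
theorem pankov_extend_equiv [FiniteDimensional R V] {S T : Submodule R V} (e : S ≃ₗ[R] T) :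
    ∃ u : V ≃ₗ[R] V, ∀ s : S, u s = e s := by
  obtain ⟨C, hC⟩ := S.exists_isCompl
  obtain ⟨C', hC'⟩ := T.exists_isCompl
  have h1 := Submodule.finrank_add_eq_of_isCompl hC
  have h2 := Submodule.finrank_add_eq_of_isCompl hC'
  have h3 : finrank R S = finrank R T := e.finrank_eq
  have hCC : finrank R C = finrank R C' := by omega
  let eC : C ≃ₗ[R] C' := LinearEquiv.ofFinrankEq _ _ hCC
  refine ⟨(Submodule.prodEquivOfIsCompl S C hC).symm.trans
      ((e.prodCongr eC).trans (Submodule.prodEquivOfIsCompl T C' hC')), fun s => ?_⟩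
  simp [LinearEquiv.trans_apply, Submodule.prodEquivOfIsCompl_symm_apply_left,
    LinearEquiv.prodCongr_apply]

/-- Automorphisms act transitively on submodules of the same finite dimension. -/
theorem pankov_exists_map_eq [FiniteDimensional R V] {S T : Submodule R V}
    (h : finrank R S = finrank R T) :
    ∃ u : V ≃ₗ[R] V, Submodule.map (u : V →ₗ[R] V) S = T := by
  obtain ⟨u, hu⟩ := pankov_extend_equiv (LinearEquiv.ofFinrankEq S T h)
  refine ⟨u, le_antisymm ?_ ?_⟩
  · rintro _ ⟨s, hs, rfl⟩
    have := hu ⟨s, hs⟩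
    simp only [LinearEquiv.coe_coe]
    rw [show u s = _ from this]
    exact Submodule.coe_mem _
  · intro t ht
    refine ⟨((LinearEquiv.ofFinrankEq S T h).symm ⟨t, ht⟩ : S), Submodule.coe_mem _, ?_⟩
    simp only [LinearEquiv.coe_coe]
    rw [hu ((LinearEquiv.ofFinrankEq S T h).symm ⟨t, ht⟩), LinearEquiv.apply_symm_apply]

/-- Automorphisms act transitively on nonzero vectors. -/
theorem pankov_exists_smul_eq [FiniteDimensional R V] {x y : V} (hx : x ≠ 0) (hy : y ≠ 0) :
    ∃ u : V ≃ₗ[R] V, u x = y := by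
  obtain ⟨u, hu⟩ := pankov_extend_equiv
    ((LinearEquiv.toSpanNonzeroSingleton R V x hx).symm.trans
      (LinearEquiv.toSpanNonzeroSingleton R V y hy))
  refine ⟨u, ?_⟩
  have h1 := hu ⟨x, Submodule.mem_span_singleton_self x⟩
  have h2 : (LinearEquiv.toSpanNonzeroSingleton R V x hx).symm
      ⟨x, Submodule.mem_span_singleton_self x⟩ = 1 := by
    rw [← LinearEquiv.toSpanNonzeroSingleton_one R V x hx, LinearEquiv.symm_apply_apply]
  rw [LinearEquiv.trans_apply, h2, LinearEquiv.toSpanNonzeroSingleton_one] at h1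
  exact h1

/-- A transvection-like automorphism sending `x` to `y` and fixing a hyperplane pointwise. -/
theorem pankov_transvection [FiniteDimensional R V] {x y : V} (hx : x ≠ 0)
    (hy : y ∉ Submodule.span R {x}) :
    ∃ (u : V ≃ₗ[R] V) (H : Submodule R V),
      finrank R H = finrank R V - 1 ∧ (∀ h ∈ H, u h = h) ∧ u x = y := by
  -- x is not in the span of y - x
  have hxW : x ∉ Submodule.span R {y - x} := by
    intro hmem
    obtain ⟨c, hc⟩ := Submodule.mem_span_singleton.mp hmem
    rcases eq_or_ne c 0 with rfl | hc0
    · rw [zero_smul] at hc; exact hx hc.symm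
    · apply hy
      have hcy : c • y = (1 + c) • x := by
        rw [smul_sub, sub_eq_iff_eq_add] at hc
        rw [add_smul, one_smul]
        exact hc
      have : y = (c⁻¹ * (1 + c)) • x := by
        rw [mul_smul, ← hcy, ← mul_smul, inv_mul_cancel₀ hc0, one_smul]
      exact Submodule.mem_span_singleton.mpr ⟨_, this.symm⟩
  set W := Submodule.span R {y - x} with hWdef
  -- a functional f with f x = 1, f (y - x) = 0
  have hxq : (Submodule.Quotient.mk x : V ⧸ W) ≠ 0 := by
    rw [Ne, Submodule.Quotient.mk_eq_zero]; exact hxW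
  obtain ⟨C, hC⟩ := (Submodule.span R {(Submodule.Quotient.mk x : V ⧸ W)}).exists_isCompl
  set φ : (V ⧸ W) →ₗ[R] R :=
    ((LinearEquiv.toSpanNonzeroSingleton R (V ⧸ W) _ hxq).symm :
        (Submodule.span R {(Submodule.Quotient.mk x : V ⧸ W)}) →ₗ[R] R) ∘ₗ
      (Submodule.linearProjOfIsCompl _ C hC) with hφdef
  set f : V →ₗ[R] R := φ ∘ₗ W.mkQ with hfdef
  have hfx : f x = 1 := by
    have hproj : Submodule.linearProjOfIsCompl _ C hC (Submodule.Quotient.mk x : V ⧸ W)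
        = ⟨Submodule.Quotient.mk x, Submodule.mem_span_singleton_self _⟩ := by
      exact Submodule.linearProjOfIsCompl_apply_left hC
        ⟨Submodule.Quotient.mk x, Submodule.mem_span_singleton_self _⟩
    have hsymm : (LinearEquiv.toSpanNonzeroSingleton R (V ⧸ W) _ hxq).symm
        ⟨Submodule.Quotient.mk x, Submodule.mem_span_singleton_self _⟩ = 1 := by
      rw [← LinearEquiv.toSpanNonzeroSingleton_one R (V ⧸ W) _ hxq,
        LinearEquiv.symm_apply_apply]
    simp only [hfdef, hφdef, LinearMap.comp_apply, Submodule.mkQ_apply]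
    rw [hproj]
    exact hsymm
  have hfyx : f (y - x) = 0 := by
    have : W.mkQ (y - x) = 0 := by
      rw [Submodule.mkQ_apply, Submodule.Quotient.mk_eq_zero]
      exact Submodule.mem_span_singleton_self _
    simp only [hfdef, LinearMap.comp_apply, this, map_zero]
  -- the transvection
  set c : V →ₗ[R] V := f.smulRight (y - x) with hcdef
  have hcomp1 : ∀ v : V, v - f v • (y - x) + f (v - f v • (y - x)) • (y - x) = v := by
    intro v
    rw [map_sub, map_smul, hfyx, smul_eq_mul, mul_zero, sub_zero]
    abel
  have hcomp2 : ∀ v : V, v + f v • (y - x) - f (v + f v • (y - x)) • (y - x) = v := by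
    intro v
    rw [map_add, map_smul, hfyx, smul_eq_mul, mul_zero, add_zero]
    abel
  refine ⟨LinearEquiv.ofLinear (LinearMap.id + c) (LinearMap.id - c) ?_ ?_,
    LinearMap.ker f, ?_, ?_, ?_⟩
  · ext v
    simpa [hcdef, LinearMap.smulRight_apply, sub_eq_add_neg] using hcomp1 v
  · ext v
    simpa [hcdef, LinearMap.smulRight_apply, sub_eq_add_neg] using hcomp2 v
  · -- dimension of the kernel
    have hrange : LinearMap.range f = ⊤ := by
      rw [LinearMap.range_eq_top]
      intro r
      exact ⟨r • x, by rw [map_smul, hfx, smul_eq_mul, mul_one]⟩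
    have := f.finrank_range_add_finrank_ker
    rw [hrange] at this
    have htop : finrank R (⊤ : Submodule R R) = 1 := by
      rw [finrank_top]; exact finrank_self R
    omega
  · intro h hh
    have : f h = 0 := hh
    simp [hcdef, LinearMap.smulRight_apply, this]
  · show x + f x • (y - x) = y
    rw [hfx, one_smul]
    abel

/-- Adding an outside vector raises the dimension by one. -/
theorem pankov_finrank_sup_span [FiniteDimensional R V] {S : Submodule R V} {x : V}
    (hx : x ∉ S) :
    finrank R ↥(S ⊔ Submodule.span R {x}) = finrank R S + 1 := by
  have hx0 : x ≠ 0 := fun h => hx (h ▸ S.zero_mem)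
  have hinf : S ⊓ Submodule.span R {x} = ⊥ := by
    rw [eq_bot_iff]
    rintro v ⟨hvS, hvx⟩
    obtain ⟨a, rfl⟩ := Submodule.mem_span_singleton.mp hvx
    rcases eq_or_ne a 0 with rfl | ha
    · simp
    · exfalso
      exact hx (by simpa [← mul_smul, inv_mul_cancel₀ ha] using S.smul_mem a⁻¹ hvS)
  have := Submodule.finrank_sup_add_finrank_inf_eq S (Submodule.span R {x})
  rw [hinf, finrank_bot, finrank_span_singleton hx0] at this
  omega

/-- Every subspace of dimension at least `k` contains a `k`-dimensional subspace. -/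
theorem pankov_exists_sub [FiniteDimensional R V] (H : Submodule R V) :
    ∀ k, k ≤ finrank R H → ∃ S, S ≤ H ∧ finrank R S = k := by
  intro k
  induction k with
  | zero => exact fun _ => ⟨⊥, bot_le, finrank_bot R V⟩
  | succ k ih =>
    intro hk
    obtain ⟨S, hSH, hS⟩ := ih (by omega)
    have hlt : S < H := by
      refine hSH.lt_of_ne ?_
      intro h
      rw [h] at hS
      omega
    obtain ⟨w, hwH, hwS⟩ := SetLike.exists_of_lt hlt
    refine ⟨S ⊔ Submodule.span R {w}, sup_le hSH ?_, ?_⟩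
    · rw [Submodule.span_le, Set.singleton_subset_iff]; exact hwH
    · rw [pankov_finrank_sup_span hwS, hS]

end Aux

/-- **Lemma 6 (Pankov).** If `g` is a non-trivial GL-mapping with `dim V_g ≤ n`, then
`dim V_g = n` and for every `(n−1)`-dimensional subspace `S ⊆ V` the subspace `S_g`
spanned by `g(S)` is `(n−1)`-dimensional. -/
theorem stmt_10 {R R' V V' : Type*} [DivisionRing R] [DivisionRing R']
    [AddCommGroup V] [Module R V] [AddCommGroup V'] [Module R' V']
    (n : ℕ) (hn : 2 ≤ n) [FiniteDimensional R V] (hdim : Module.finrank R V = n)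
    (g : V → V')
    (hGL : ∀ u : V ≃ₗ[R] V, ∃ u' : V' ≃ₗ[R'] V', g ∘ ⇑u = ⇑u' ∘ g)
    (hnt : ∃ x y : V, x ≠ 0 ∧ y ≠ 0 ∧ g x ≠ g y)
    (hspan : Module.rank R' (Submodule.span R' (Set.range g)) ≤ n) :
    Module.rank R' (Submodule.span R' (Set.range g)) = n ∧
    ∀ S : Submodule R V, Module.finrank R S = n - 1 →
      Module.rank R' (Submodule.span R' (g '' (S : Set V))) = ((n - 1 : ℕ) : Cardinal) := by
  classical
  -- finiteness of all the spans involved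
  haveI hWfin : FiniteDimensional R' ↥(Submodule.span R' (Set.range g)) := by
    apply Module.rank_lt_aleph0_iff.mp
    exact lt_of_le_of_lt hspan (Cardinal.nat_lt_aleph0 n)
  have hfinSg : ∀ s : Set V, FiniteDimensional R' ↥(Submodule.span R' (g '' s)) := fun s =>
    Submodule.finiteDimensional_of_le (Submodule.span_mono (Set.image_subset_range g s))
  -- nonzero vectors have nonzero image
  have hg0 : ∀ x : V, x ≠ 0 → g x ≠ 0 := by
    intro x hx h0
    obtain ⟨a, b, ha, hb, hab⟩ := hnt
    have hzero : ∀ y : V, y ≠ 0 → g y = 0 := by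
      intro y hy
      obtain ⟨u, hu⟩ := pankov_exists_smul_eq (R := R) hx hy
      obtain ⟨u', hgu⟩ := hGL u
      have : g y = u' (g x) := by rw [← hu]; exact congrFun hgu x
      rw [this, h0, map_zero]
    exact hab ((hzero a ha).trans (hzero b hb).symm)
  -- the dimension of the span of the image depends only on the dimension of the subspace
  have hwd : ∀ S T : Submodule R V, finrank R S = finrank R T →
      finrank R' ↥(Submodule.span R' (g '' (S : Set V))) =
        finrank R' ↥(Submodule.span R' (g '' (T : Set V))) := by
    intro S T h
    obtain ⟨u, hu⟩ := pankov_exists_map_eq h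
    obtain ⟨u', hgu⟩ := hGL u
    have himg : g '' (T : Set V) = ⇑u' '' (g '' (S : Set V)) := by
      rw [← hu]
      rw [Submodule.map_coe, ← Set.image_comp, ← Set.image_comp]
      simp only [LinearEquiv.coe_coe]
      rw [hgu]
    rw [himg, show ⇑u' = ⇑(u' : V' →ₗ[R'] V') from rfl, Submodule.span_image]
    exact (LinearEquiv.finrank_map_eq u' _).symm ▸ rfl
  -- fixing lemma
  have hfix : ∀ (u : V ≃ₗ[R] V) (S : Submodule R V), (∀ s ∈ S, u s = s) →
      (∀ x : V, g x ∈ Submodule.span R' (g '' (S : Set V))) → ∀ x, g (u x) = g x := by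
    intro u S hustab hall x
    obtain ⟨u', hgu⟩ := hGL u
    have h1 : Submodule.span R' (g '' (S : Set V)) ≤
        LinearMap.eqLocus (u' : V' →ₗ[R'] V') LinearMap.id := by
      rw [Submodule.span_le]
      rintro _ ⟨s, hs, rfl⟩
      show u' (g s) = g s
      have : g (u s) = u' (g s) := congrFun hgu s
      rw [← this, hustab s hs]
    have h2 : u' (g x) = g x := h1 (hall x)
    have h3 : g (u x) = u' (g x) := congrFun hgu x
    rw [h3, h2]
  -- the collapse lemma: span of image cannot stabilize below the top
  have hcollapse : ∀ k : ℕ, k + 1 ≤ n → ∀ S T : Submodule R V, S ≤ T →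
      finrank R S = k → finrank R T = k + 1 →
      Submodule.span R' (g '' (S : Set V)) = Submodule.span R' (g '' (T : Set V)) → False := by
    intro k hk S T hST hS hT heq
    -- every k-dimensional subspace has span of image containing all of g
    have hstar : ∀ S₀ : Submodule R V, finrank R S₀ = k →
        ∀ x : V, g x ∈ Submodule.span R' (g '' (S₀ : Set V)) := by
      intro S₀ hS₀ x
      by_cases hx : x ∈ S₀
      · exact Submodule.subset_span ⟨x, hx, rfl⟩
      · haveI := hfinSg (S₀ : Set V)
        haveI := hfinSg ((S₀ ⊔ Submodule.span R {x} : Submodule R V) : Set V)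
        haveI := hfinSg (T : Set V)
        have hT₀ : finrank R ↥(S₀ ⊔ Submodule.span R {x}) = k + 1 := by
          rw [pankov_finrank_sup_span hx, hS₀]
        have e1 := hwd S₀ S (by rw [hS₀, hS])
        have e2 := hwd (S₀ ⊔ Submodule.span R {x}) T (by rw [hT₀, hT])
        have hfeq : finrank R' ↥(Submodule.span R' (g '' (S : Set V))) =
            finrank R' ↥(Submodule.span R' (g '' (T : Set V))) := by rw [heq]
        have hle : Submodule.span R' (g '' (S₀ : Set V)) ≤
            Submodule.span R' (g '' ((S₀ ⊔ Submodule.span R {x} : Submodule R V) : Set V)) :=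
          Submodule.span_mono (Set.image_mono (by exact_mod_cast le_sup_left))
        have hspaneq : Submodule.span R' (g '' (S₀ : Set V)) =
            Submodule.span R' (g '' ((S₀ ⊔ Submodule.span R {x} : Submodule R V) : Set V)) := by
          apply Submodule.eq_of_le_of_finrank_le hle
          rw [e2, ← hfeq, e1]
        rw [hspaneq]
        refine Submodule.subset_span ⟨x, ?_, rfl⟩
        exact (le_sup_right : Submodule.span R {x} ≤ _) (Submodule.mem_span_singleton_self x)
    -- g is then constant on independent pairs
    have hC1 : ∀ x y : V, x ≠ 0 → y ∉ Submodule.span R {x} → g x = g y := by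
      intro x y hx hy
      obtain ⟨u, H, hH, hufix, hux⟩ := pankov_transvection hx hy
      obtain ⟨S₀, hS₀H, hS₀⟩ := pankov_exists_sub H k (by rw [hH, hdim]; omega)
      have hguu := hfix u S₀ (fun s hs => hufix s (hS₀H hs)) (hstar S₀ hS₀)
      have := hguu x
      rw [hux] at this
      exact this.symm
    -- hence g is constant on all nonzero vectors
    have hconst : ∀ x y : V, x ≠ 0 → y ≠ 0 → g x = g y := by
      intro x y hx hy
      by_cases hxy : y ∈ Submodule.span R {x}
      · have hne : Submodule.span R {x} ≠ (⊤ : Submodule R V) := by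
          intro h
          have h1 : finrank R ↥(Submodule.span R {x}) = 1 := finrank_span_singleton hx
          rw [h, finrank_top, hdim] at h1
          omega
        obtain ⟨z, hz⟩ : ∃ z, z ∉ Submodule.span R {x} := by
          by_contra h
          push_neg at h
          exact hne (Submodule.eq_top_iff'.mpr h)
        have h1 : g x = g z := hC1 x z hx hz
        have h2 : g y = g z := by
          apply hC1 y z hy
          obtain ⟨a, ha⟩ := Submodule.mem_span_singleton.mp hxy
          have ha0 : a ≠ 0 := by
            rintro rfl
            rw [zero_smul] at ha
            exact hy ha.symm
          have : Submodule.span R {y} = Submodule.span R {x} := by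
            rw [← ha]
            exact Submodule.span_singleton_smul_eq (IsUnit.mk0 a ha0) x
          rw [this]
          exact hz
        rw [h1, h2]
      · exact hC1 x y hx hxy
    obtain ⟨a, b, ha, hb, hab⟩ := hnt
    exact hab (hconst a b ha hb)
  -- the main induction: k-dimensional subspaces have image span of dimension ≥ k
  have hINV : ∀ k, 1 ≤ k → k ≤ n → ∀ S : Submodule R V, finrank R S = k →
      k ≤ finrank R' ↥(Submodule.span R' (g '' (S : Set V))) := by
    intro k
    induction k with
    | zero => omega
    | succ k ih =>
      intro _ hk S hS
      haveI := hfinSg (S : Set V)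
      rcases Nat.eq_zero_or_pos k with rfl | hkpos
      · -- base case: dimension 1
        have hSne : S ≠ ⊥ := by
          intro h
          rw [h, finrank_bot] at hS
          omega
        obtain ⟨x, hxS, hx0⟩ := S.ne_bot_iff.mp hSne
        have hgx : g x ∈ Submodule.span R' (g '' (S : Set V)) :=
          Submodule.subset_span ⟨x, hxS, rfl⟩
        have hne : Submodule.span R' (g '' (S : Set V)) ≠ ⊥ := by
          intro h
          rw [h, Submodule.mem_bot] at hgx
          exact hg0 x hx0 hgx
        have hpos : finrank R' ↥(Submodule.span R' (g '' (S : Set V))) ≠ 0 := by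
          intro h
          exact hne (Submodule.finrank_eq_zero.mp h)
        omega
      · -- inductive step
        by_contra hcon
        push_neg at hcon
        have hupper : finrank R' ↥(Submodule.span R' (g '' (S : Set V))) ≤ k := by omega
        obtain ⟨S₀, hS₀S, hS₀⟩ := pankov_exists_sub S k (by omega)
        haveI := hfinSg (S₀ : Set V)
        have hlow : k ≤ finrank R' ↥(Submodule.span R' (g '' (S₀ : Set V))) :=
          ih hkpos (by omega) S₀ hS₀
        have hle : Submodule.span R' (g '' (S₀ : Set V)) ≤
            Submodule.span R' (g '' (S : Set V)) :=
          Submodule.span_mono (Set.image_mono (by exact_mod_cast hS₀S))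
        have hspaneq : Submodule.span R' (g '' (S₀ : Set V)) =
            Submodule.span R' (g '' (S : Set V)) :=
          Submodule.eq_of_le_of_finrank_le hle (le_trans hupper hlow)
        exact hcollapse k hk S₀ S hS₀S hS₀ hS hspaneq
  -- conclusion
  have hrange_eq : g '' ((⊤ : Submodule R V) : Set V) = Set.range g := by
    rw [Submodule.top_coe, Set.image_univ]
  have hfinrank_top : finrank R' ↥(Submodule.span R' (Set.range g)) = n := by
    have h1 : n ≤ finrank R' ↥(Submodule.span R' (Set.range g)) := by
      have := hINV n (by omega) le_rfl ⊤ (by rw [finrank_top]; exact hdim)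
      rwa [hrange_eq] at this
    have h2 : finrank R' ↥(Submodule.span R' (Set.range g)) ≤ n :=
      finrank_le_of_rank_le hspan
    omega
  constructor
  · rw [← Module.finrank_eq_rank, hfinrank_top]
  · intro S hS
    haveI := hfinSg (S : Set V)
    have hge : n - 1 ≤ finrank R' ↥(Submodule.span R' (g '' (S : Set V))) :=
      hINV (n - 1) (by omega) (by omega) S hS
    have hle : finrank R' ↥(Submodule.span R' (g '' (S : Set V))) ≤ n - 1 := by
      by_contra h
      push_neg at h
      have hgen : n ≤ finrank R' ↥(Submodule.span R' (g '' (S : Set V))) := by omega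
      have hsub : Submodule.span R' (g '' (S : Set V)) ≤ Submodule.span R' (Set.range g) :=
        Submodule.span_mono (Set.image_subset_range g _)
      have heqtop : Submodule.span R' (g '' (S : Set V)) = Submodule.span R' (Set.range g) :=
        Submodule.eq_of_le_of_finrank_le hsub (by omega)
      refine hcollapse (n - 1) (by omega) S ⊤ le_top hS ?_ ?_
      · rw [finrank_top, hdim]; omega
      · rw [heqtop, hrange_eq]
    have hfeq : finrank R' ↥(Submodule.span R' (g '' (S : Set V))) = n - 1 :=
      le_antisymm hle hge
    rw [← Module.finrank_eq_rank, hfeq]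
end

section
/- Let V and V' be left vector spaces over division rings R and R' with dim V = n ≥ 2 finite, and let g : V → V' be a non-trivial GL-mapping such that the R'-subspace spanned by g(V) has dimension at most n. Then g(0) = 0. -/
open Module Finset

section Aux
variable {R V : Type*} [DivisionRing R] [AddCommGroup V] [Module R V]

lemma auxPairNe {v w : V} (h : LinearIndependent R ![v, w]) : v ≠ w := by
  intro hvw
  have h01 : (![v, w] : Fin 2 → V) 0 = ![v, w] 1 := by simp [hvw]
  have := h.injective h01
  simp at this

lemma auxPairSwap {v w : V} (h : LinearIndependent R ![v, w]) :
    LinearIndependent R ![w, v] := by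
  have h2 := h.comp (Equiv.swap 0 1) (Equiv.injective _)
  have : (![v, w] ∘ (Equiv.swap (0 : Fin 2) 1)) = ![w, v] := by
    funext i
    fin_cases i <;> simp [Equiv.swap_apply_left, Equiv.swap_apply_right]
  rwa [this] at h2

lemma auxIndep {v z : V} (hv : v ≠ 0) (hz : z ∉ Submodule.span R {v}) :
    LinearIndependent R ![v, z] := by
  rw [linearIndependent_fin2]
  constructor
  · simp only [Matrix.cons_val_one, Matrix.head_cons]
    intro h; subst h; exact hz (Submodule.zero_mem _)
  · intro a ha
    simp only [Matrix.cons_val_one, Matrix.head_cons, Matrix.cons_val_zero] at ha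
    rcases eq_or_ne a 0 with rfl | h0
    · rw [zero_smul] at ha; exact hv ha.symm
    · apply hz
      rw [Submodule.mem_span_singleton]
      exact ⟨a⁻¹, by rw [← ha, smul_smul, inv_mul_cancel₀ h0, one_smul]⟩

lemma auxBasisUpdate [FiniteDimensional R V] {n : ℕ} (f : Basis (Fin n) R V)
    {j k : Fin n} (hjk : j ≠ k) :
    ∃ f₂ : Basis (Fin n) R V, f₂ j = f j + f k ∧ ∀ i, i ≠ j → f₂ i = f i := by
  classical
  let T : V →ₗ[R] V := f.constr ℕ (fun i => if i = j then f j + f k else f i)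
  let T' : V →ₗ[R] V := f.constr ℕ (fun i => if i = j then f j - f k else f i)
  have hkj : ¬ (k = j) := fun h => hjk h.symm
  have hTT' : T.comp T' = LinearMap.id := by
    apply f.ext; intro i
    simp only [LinearMap.comp_apply, LinearMap.id_apply, Basis.constr_basis, T, T']
    by_cases hi : i = j
    · subst hi
      rw [if_pos rfl, map_sub]
      simp only [Basis.constr_basis, T]
      simp [hkj]
    · rw [if_neg hi]
      simp only [Basis.constr_basis, T]
      rw [if_neg hi]
  have hT'T : T'.comp T = LinearMap.id := by
    apply f.ext; intro i
    simp only [LinearMap.comp_apply, LinearMap.id_apply, Basis.constr_basis, T, T']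
    by_cases hi : i = j
    · subst hi
      rw [if_pos rfl, map_add]
      simp only [Basis.constr_basis, T']
      simp [hkj]
    · rw [if_neg hi]
      simp only [Basis.constr_basis, T']
      rw [if_neg hi]
  let u₀ : V ≃ₗ[R] V := LinearEquiv.ofLinear T T' hTT' hT'T
  refine ⟨f.map u₀, ?_, ?_⟩
  · rw [Basis.map_apply]
    show T (f j) = f j + f k
    rw [Basis.constr_basis, if_pos rfl]
  · intro i hi
    rw [Basis.map_apply]
    show T (f i) = f i
    rw [Basis.constr_basis, if_neg hi]

lemma auxBasisPair [FiniteDimensional R V] {n : ℕ} (hdim : Module.finrank R V = n)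
    {v w : V} (hvw : LinearIndependent R ![v, w]) {j k : Fin n} (hjk : j ≠ k) :
    ∃ f : Basis (Fin n) R V, f j = v ∧ f k = w := by
  classical
  have hrange : LinearIndepOn R id (Set.range ![v, w]) := hvw.linearIndepOn_id
  let B : Basis (hrange.extend (Set.subset_univ _)) R V := Basis.extend hrange
  have : Fintype (hrange.extend (Set.subset_univ _)) := FiniteDimensional.fintypeBasisIndex B
  have hcard : Fintype.card (hrange.extend (Set.subset_univ _)) = n := by
    rw [← Module.finrank_eq_card_basis B, hdim]
  have hsub : Set.range ![v, w] ⊆ hrange.extend (Set.subset_univ _) :=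
    hrange.subset_extend _
  have hv : v ∈ hrange.extend (Set.subset_univ _) := hsub ⟨0, rfl⟩
  have hw : w ∈ hrange.extend (Set.subset_univ _) := hsub ⟨1, rfl⟩
  have hne : v ≠ w := auxPairNe hvw
  let φ : hrange.extend (Set.subset_univ _) ≃ Fin n := Fintype.equivFinOfCardEq hcard
  let ψ₁ : Fin n ≃ hrange.extend (Set.subset_univ _) :=
    (Equiv.swap j (φ ⟨v, hv⟩)).trans φ.symm
  have hψ₁j : ψ₁ j = ⟨v, hv⟩ := by simp [ψ₁]
  have ha : ψ₁.symm ⟨w, hw⟩ ≠ j := by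
    intro h
    apply hne
    have : (⟨w, hw⟩ : hrange.extend (Set.subset_univ _)) = ψ₁ j := by
      rw [← h, Equiv.apply_symm_apply]
    rw [hψ₁j] at this
    exact (congrArg Subtype.val this).symm
  let ψ : Fin n ≃ hrange.extend (Set.subset_univ _) :=
    (Equiv.swap k (ψ₁.symm ⟨w, hw⟩)).trans ψ₁
  have hψk : ψ k = ⟨w, hw⟩ := by
    show ψ₁ (Equiv.swap k (ψ₁.symm ⟨w, hw⟩) k) = _
    rw [Equiv.swap_apply_left, Equiv.apply_symm_apply]
  have hψj : ψ j = ⟨v, hv⟩ := by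
    show ψ₁ (Equiv.swap k (ψ₁.symm ⟨w, hw⟩) j) = _
    rw [Equiv.swap_apply_of_ne_of_ne hjk (Ne.symm ha), hψ₁j]
  refine ⟨B.reindex ψ.symm, ?_, ?_⟩ <;> rw [Basis.reindex_apply, Equiv.symm_symm]
  · rw [hψj]; exact Basis.extend_apply_self hrange _
  · rw [hψk]; exact Basis.extend_apply_self hrange _

end Aux

/-- **Lemma 8 (Pankov).** If `g` is a non-trivial GL-mapping with `dim V_g ≤ n`,
then `g(0) = 0`. -/
theorem stmt_12 {R R' V V' : Type*} [DivisionRing R] [DivisionRing R']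
    [AddCommGroup V] [Module R V] [AddCommGroup V'] [Module R' V']
    (n : ℕ) (hn : 2 ≤ n) [FiniteDimensional R V] (hdim : Module.finrank R V = n)
    (g : V → V')
    (hGL : ∀ u : V ≃ₗ[R] V, ∃ u' : V' ≃ₗ[R'] V', g ∘ ⇑u = ⇑u' ∘ g)
    (hnt : ∃ x y : V, x ≠ 0 ∧ y ≠ 0 ∧ g x ≠ g y)
    (hspan : Module.rank R' (Submodule.span R' (Set.range g)) ≤ n) :
    g 0 = 0 := by
  classical
  let e : Basis (Fin n) R V := Module.finBasisOfFinrankEq R V hdim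
  set W : Submodule R' V' := Submodule.span R' (Set.range g) with hW
  let F : Fin (n + 1) → V' := Fin.cons (g 0) (fun i => g (e i))
  have hFmem : ∀ i, F i ∈ W := by
    intro i
    refine Fin.cases ?_ ?_ i
    · simpa [F] using Submodule.subset_span (Set.mem_range_self (0 : V))
    · intro i; simpa [F] using Submodule.subset_span (Set.mem_range_self (e i))
  have hdep : ¬ LinearIndependent R' F := by
    intro hF
    let F' : Fin (n + 1) → W := fun i => ⟨F i, hFmem i⟩
    have hF' : LinearIndependent R' F' := by
      apply LinearIndependent.of_comp W.subtype
      have : W.subtype ∘ F' = F := rfl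
      rwa [this]
    have hle := hF'.cardinal_lift_le_rank
    rw [Cardinal.mk_fin, Cardinal.lift_natCast] at hle
    have hsp' := Cardinal.lift_le.mpr hspan
    rw [Cardinal.lift_natCast] at hsp'
    have hfin := hle.trans hsp'
    rw [Nat.cast_le] at hfin
    omega
  obtain ⟨c, hc0, i0, hi0⟩ := Fintype.not_linearIndependent_iff.mp hdep
  set b0 : R' := c 0 with hb0def
  set b : Fin n → R' := fun i => c i.succ with hbdef
  have hrel : b0 • g 0 + ∑ i, b i • g (e i) = 0 := by
    rw [Fin.sum_univ_succ] at hc0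
    simpa [F, b, b0] using hc0
  have key : ∀ u : V ≃ₗ[R] V, b0 • g 0 + ∑ i, b i • g (u (e i)) = 0 := by
    intro u
    obtain ⟨u', hu'⟩ := hGL u
    have happ : ∀ x, g (u x) = u' (g x) := fun x => congrFun hu' x
    have h0 : u' (g 0) = g 0 := by
      have := happ 0; rw [map_zero] at this; exact this.symm
    calc b0 • g 0 + ∑ i, b i • g (u (e i))
        = u' (b0 • g 0 + ∑ i, b i • g (e i)) := by
          rw [map_add, map_smul, h0, map_sum]
          congr 1
          exact Finset.sum_congr rfl fun i _ => by rw [map_smul, ← happ]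
      _ = 0 := by rw [hrel, map_zero]
  have key' : ∀ f : Basis (Fin n) R V, b0 • g 0 + ∑ i, b i • g (f i) = 0 := by
    intro f
    have := key (e.equiv f (Equiv.refl _))
    simpa [Basis.equiv_apply] using this
  by_cases hb : ∀ i, b i = 0
  · have hb0 : b0 ≠ 0 := by
      rcases Fin.eq_zero_or_eq_succ i0 with rfl | ⟨i, rfl⟩
      · exact hi0
      · exact absurd (hb i) hi0
    have hz : b0 • g 0 = 0 := by
      have := hrel
      rw [Finset.sum_eq_zero (fun i _ => by rw [hb i, zero_smul]), add_zero] at this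
      exact this
    have := congrArg (fun x => b0⁻¹ • x) hz
    simpa [smul_smul, inv_mul_cancel₀ hb0] using this
  · exfalso
    push_neg at hb
    obtain ⟨j, hj⟩ := hb
    have hnontriv : Nontrivial (Fin n) := by
      rcases n with _ | _ | n
      · omega
      · omega
      · infer_instance
    obtain ⟨k, hk⟩ := exists_ne j
    have hjk : j ≠ k := Ne.symm hk
    have step1 : ∀ v w : V, LinearIndependent R ![v, w] → g v = g (v + w) := by
      intro v w hvw
      obtain ⟨f, hfj, hfk⟩ := auxBasisPair hdim hvw hjk
      obtain ⟨f₂, hf₂j, hf₂i⟩ := auxBasisUpdate f hjk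
      have h1 := key' f
      have h2 := key' f₂
      have hsumeq : ∑ i, b i • g (f i) = ∑ i, b i • g (f₂ i) :=
        add_left_cancel (h1.trans h2.symm)
      rw [← Finset.sum_erase_add _ _ (Finset.mem_univ j),
          ← Finset.sum_erase_add _ _ (Finset.mem_univ j)] at hsumeq
      have hrest : ∑ i ∈ Finset.univ.erase j, b i • g (f i)
          = ∑ i ∈ Finset.univ.erase j, b i • g (f₂ i) :=
        Finset.sum_congr rfl fun i hi => by
          rw [hf₂i i (Finset.ne_of_mem_erase hi)]
      rw [hrest] at hsumeq
      have hjj : b j • g (f j) = b j • g (f₂ j) := add_left_cancel hsumeq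
      rw [hfj, hf₂j, hfj, hfk] at hjj
      have := congrArg (fun x => (b j)⁻¹ • x) hjj
      simpa [smul_smul, inv_mul_cancel₀ hj] using this
    have step2 : ∀ v w : V, LinearIndependent R ![v, w] → g v = g w := by
      intro v w h
      have h1 := step1 v w h
      have h2 := step1 w v (auxPairSwap h)
      rw [add_comm] at h2
      exact h1.trans h2.symm
    have gconst : ∀ v w : V, v ≠ 0 → w ≠ 0 → g v = g w := by
      intro v w hv hw
      by_cases hvw : LinearIndependent R ![v, w]
      · exact step2 v w hvw
      · rw [linearIndependent_fin2] at hvw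
        push_neg at hvw
        have hw' : (![v, w] : Fin 2 → V) 1 ≠ 0 := by simpa using hw
        obtain ⟨a, ha⟩ := hvw hw'
        simp only [Matrix.cons_val_one, Matrix.head_cons, Matrix.cons_val_zero] at ha
        have ha0 : a ≠ 0 := by
          intro h; rw [h, zero_smul] at ha; exact hv ha.symm
        have hspan_ne : Submodule.span R {w} ≠ ⊤ := by
          intro h
          have h1 : Module.finrank R (Submodule.span R {w}) = 1 :=
            finrank_span_singleton hw
          rw [h, finrank_top] at h1
          omega
        obtain ⟨z, hz⟩ : ∃ z, z ∉ Submodule.span R {w} := by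
          by_contra h
          push_neg at h
          exact hspan_ne (Submodule.eq_top_iff'.mpr h)
        have hzv : z ∉ Submodule.span R {v} := by
          intro hmem
          apply hz
          rw [Submodule.mem_span_singleton] at hmem ⊢
          obtain ⟨d, hd⟩ := hmem
          exact ⟨d * a, by rw [← hd, ← ha, smul_smul]⟩
        have h1 := step2 w z (auxIndep hw hz)
        have h2 := step2 v z (auxIndep hv hzv)
        exact h2.trans h1.symm
    obtain ⟨x, y, hx, hy, hxy⟩ := hnt
    exact hxy (gconst x y hx hy)
end

section
/- Let V be a left vector space over a division ring R with dim V = n ≥ 2 finite, let V' be a left vector space over a field R', and let f : ℙ(V) → ℙ(V') be a non-constant PGL-mapping. Then f transfers every independent subset of ℙ(V) consisting of n−1 elements to an independent subset of ℙ(V'): if P₁, …, P_{n−1} ∈ ℙ(V) form an independent subset, then f(P₁), …, f(P_{n−1}) form an independent subset of ℙ(V'). -/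
section PankovAux

open Projectivization Set Submodule

variable {K V : Type*} [DivisionRing K] [AddCommGroup V] [Module K V]

private theorem pankov_sumExtend_inl {m : ℕ} (v : Fin m → V)
    (hv : LinearIndependent K v) (i : Fin m) : (Module.Basis.sumExtend hv) (Sum.inl i) = v i := by
  rw [Module.Basis.sumExtend, Module.Basis.reindex_apply]
  erw [Equiv.symm_symm]
  erw [Equiv.trans_apply, Equiv.sumCongr_apply, Sum.map_inl, Equiv.Set.sumDiffSubset_apply_inl]
  erw [Module.Basis.extend_apply_self]
  rfl

private lemma pankov_independent_mk_iff {ι : Type*} (v : ι → V) (hv : ∀ i, v i ≠ 0) :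
    Independent (fun i => Projectivization.mk K (v i) (hv i)) ↔ LinearIndependent K v := by
  constructor
  · intro h
    rw [Projectivization.independent_iff] at h
    choose c hc using fun i => exists_smul_eq_mk_rep K (v i) (hv i)
    have hrep : (fun i => c i • v i)
        = Projectivization.rep ∘ (fun i => Projectivization.mk K (v i) (hv i)) := by
      funext i; exact hc i
    have h2 := (hrep ▸ h).units_smul (fun i => (c i)⁻¹)
    convert h2 using 1
    funext i
    simp
  · intro h
    exact Independent.mk v hv h

private lemma pankov_pmap_eq (u : V ≃ₗ[K] V) (P : Projectivization K V) :
    Projectivization.map u.toLinearMap u.injective P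
      = Projectivization.mk K (u P.rep) (by simp [P.rep_nonzero]) := by
  conv_lhs => rw [← P.mk_rep]
  rw [Projectivization.map_mk]
  rfl

private lemma pankov_indep_pmap_iff {ι : Type*} (u : V ≃ₗ[K] V) (A : ι → Projectivization K V) :
    Independent (fun i => Projectivization.map u.toLinearMap u.injective (A i))
      ↔ Independent A := by
  have h1 : (fun i => Projectivization.map u.toLinearMap u.injective (A i))
      = fun i => Projectivization.mk K (u (A i).rep) (by simp [(A i).rep_nonzero]) := by
    funext i; exact pankov_pmap_eq u (A i)
  rw [h1, pankov_independent_mk_iff]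
  have h2 : (fun i => u ((A i).rep)) = u.toLinearMap ∘ (fun i => (A i).rep) := rfl
  rw [h2, LinearMap.linearIndependent_iff u.toLinearMap u.ker]
  rw [Projectivization.independent_iff]
  rfl

private lemma pankov_indep_comp {ι κ : Type*} {A : ι → Projectivization K V} (hA : Independent A)
    {g : κ → ι} (hg : Function.Injective g) : Independent (A ∘ g) := by
  rw [Projectivization.independent_iff] at hA ⊢
  exact hA.comp g hg

private lemma pankov_exists_linEquiv_map [FiniteDimensional K V] {m : ℕ} (v w : Fin m → V)
    (hv : LinearIndependent K v) (hw : LinearIndependent K w) :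
    ∃ u : V ≃ₗ[K] V, ∀ i, u (v i) = w i := by
  let b := Module.Basis.sumExtend hv
  let c := Module.Basis.sumExtend hw
  haveI fb : Fintype (Fin m ⊕ Module.Basis.sumExtendIndex hv) := FiniteDimensional.fintypeBasisIndex b
  haveI fc : Fintype (Fin m ⊕ Module.Basis.sumExtendIndex hw) := FiniteDimensional.fintypeBasisIndex c
  haveI : Fintype (Module.Basis.sumExtendIndex hv) := @Fintype.sumRight _ _ fb
  haveI : Fintype (Module.Basis.sumExtendIndex hw) := @Fintype.sumRight _ _ fc
  have hcard : Fintype.card (Module.Basis.sumExtendIndex hv) = Fintype.card (Module.Basis.sumExtendIndex hw) := by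
    have h1 := Module.finrank_eq_card_basis b
    have h2 := Module.finrank_eq_card_basis c
    rw [h1] at h2
    rw [Subsingleton.elim fb (instFintypeSum _ _), Subsingleton.elim fc (instFintypeSum _ _)] at h2
    rw [Fintype.card_sum, Fintype.card_sum] at h2
    omega
  let e : (Fin m ⊕ Module.Basis.sumExtendIndex hv) ≃ (Fin m ⊕ Module.Basis.sumExtendIndex hw) :=
    Equiv.sumCongr (Equiv.refl _) (Fintype.equivOfCardEq hcard)
  refine ⟨b.equiv c e, fun i => ?_⟩
  have h1 : v i = b (Sum.inl i) := (pankov_sumExtend_inl v hv i).symm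
  rw [h1, Module.Basis.equiv_apply]
  have : e (Sum.inl i) = Sum.inl i := rfl
  rw [this, pankov_sumExtend_inl w hw i]

end PankovAux

section PankovMain

open Projectivization Set Submodule

variable {R V R' V' : Type*} [DivisionRing R] [Field R']
    [AddCommGroup V] [Module R V] [AddCommGroup V'] [Module R' V']
    (f : Projectivization R V → Projectivization R' V')

/-- Claim A, step 1: if `P` is outside the span of the `s i`, then `f P` lies in the span
of the images. -/
private lemma pankov_claimA1 {m : ℕ}
    (Dall : ∀ A : Fin (m+1) → Projectivization R V, Independent A → ¬ Independent (f ∘ A))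
    (Iall : ∀ B : Fin m → Projectivization R V, Independent B → Independent (f ∘ B))
    (s : Fin m → Projectivization R V) (hs : Independent s) (P : Projectivization R V)
    (hP : P.rep ∉ span R (range fun i => (s i).rep)) :
    (f P).rep ∈ span R' (range fun i => (f (s i)).rep) := by
  have hsrep : LinearIndependent R fun i => (s i).rep := Projectivization.independent_iff.mp hs
  set A : Fin (m+1) → Projectivization R V := Fin.cons P s with hA_def
  have hrepA : (Projectivization.rep ∘ A) = Fin.cons P.rep (fun i => (s i).rep) := by
    funext i
    refine Fin.cases ?_ ?_ i <;> simp [hA_def]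
  have hA : Independent A := by
    rw [Projectivization.independent_iff, hrepA, linearIndependent_fin_cons]
    exact ⟨hsrep, hP⟩
  have hdep := Dall A hA
  rw [Projectivization.independent_iff] at hdep
  have hrepfA : (Projectivization.rep ∘ (f ∘ A)) = Fin.cons (f P).rep (fun i => (f (s i)).rep) := by
    funext i
    refine Fin.cases ?_ ?_ i <;> simp [hA_def]
  rw [hrepfA, linearIndependent_fin_cons] at hdep
  by_contra hcon
  exact hdep ⟨Projectivization.independent_iff.mp (Iall s hs), hcon⟩

private lemma pankov_claimA [FiniteDimensional R V] {m : ℕ} (hm : m < Module.finrank R V)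
    (Dall : ∀ A : Fin (m+1) → Projectivization R V, Independent A → ¬ Independent (f ∘ A))
    (Iall : ∀ B : Fin m → Projectivization R V, Independent B → Independent (f ∘ B))
    (s : Fin m → Projectivization R V) (hs : Independent s) (P : Projectivization R V) :
    (f P).rep ∈ span R' (range fun i => (f (s i)).rep) := by
  classical
  have hsrep : LinearIndependent R fun i => (s i).rep := Projectivization.independent_iff.mp hs
  set S : Submodule R V := span R (range fun i => (s i).rep) with hS_def
  by_cases hP : P.rep ∈ S
  · -- find w outside S
    have hSne : S ≠ ⊤ := by
      intro htop
      have h1 : Module.finrank R S ≤ m := by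
        have := finrank_span_le_card (R := R) (range fun i => (s i).rep)
        have hcard : (range fun i => (s i).rep).toFinset.card ≤ m := by
          simpa using Finset.card_image_le (s := Finset.univ) (f := fun i => (s i).rep)
        calc Module.finrank R S ≤ _ := by rw [hS_def]; exact this
          _ ≤ m := hcard
      rw [htop] at h1
      have := finrank_top R V
      omega
    obtain ⟨w, hw⟩ : ∃ w, w ∉ S := by
      by_contra hcon
      push_neg at hcon
      exact hSne (eq_top_iff'.mpr hcon)
    have hw0 : w ≠ 0 := fun h => hw (h ▸ S.zero_mem)
    -- coefficients of P.rep
    obtain ⟨c, hc⟩ := (mem_span_range_iff_exists_fun R).mp hP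
    obtain ⟨j, hj⟩ : ∃ j, c j ≠ 0 := by
      by_contra hcon
      push_neg at hcon
      apply P.rep_nonzero
      rw [← hc]
      simp [hcon]
    -- the auxiliary tuple
    set t : Fin m → V := fun i => if i = j then w else (s i).rep + w with ht_def
    have htS : ∀ i, t i ∉ S := by
      intro i hti
      by_cases hij : i = j
      · rw [ht_def] at hti; simp only [hij, if_pos rfl] at hti; exact hw hti
      · rw [ht_def] at hti; simp only [if_neg hij] at hti
        have hsi : (s i).rep ∈ S := subset_span ⟨i, rfl⟩
        exact hw (by simpa using S.sub_mem hti hsi)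
    have ht0 : ∀ i, t i ≠ 0 := fun i h => htS i (h ▸ S.zero_mem)
    -- decomposition of linear combinations of t
    have hdecomp : ∀ g : Fin m → R,
        (∑ i, g i • t i) = (∑ i, g i • (if i = j then 0 else (s i).rep)) + (∑ i, g i) • w := by
      intro g
      rw [Finset.sum_smul, ← Finset.sum_add_distrib]
      refine Finset.sum_congr rfl fun i _ => ?_
      by_cases hij : i = j
      · simp [ht_def, hij]
      · simp [ht_def, hij, smul_add]
    have hpart : ∀ g : Fin m → R, (∑ i, g i • (if i = j then 0 else (s i).rep)) ∈ S := by
      intro g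
      refine Submodule.sum_mem _ fun i _ => ?_
      by_cases hij : i = j
      · simp [hij]
      · simp only [if_neg hij]
        exact S.smul_mem _ (subset_span ⟨i, rfl⟩)
    have hsumzero : ∀ g : Fin m → R, (∑ i, g i • t i) ∈ S → (∑ i, g i) = 0 := by
      intro g hmem
      rw [hdecomp g] at hmem
      by_contra hne
      apply hw
      have h2 : (∑ i, g i) • w ∈ S := by
        have := S.sub_mem hmem (hpart g)
        simpa using this
      have := S.smul_mem (∑ i, g i)⁻¹ h2
      rwa [smul_smul, inv_mul_cancel₀ hne, one_smul] at this
    -- t is linearly independent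
    have htind : LinearIndependent R t := by
      rw [Fintype.linearIndependent_iff]
      intro g hg
      have hgsum : (∑ i, g i) = 0 := hsumzero g (hg ▸ S.zero_mem)
      have h3 : (∑ i, g i • (if i = j then 0 else (s i).rep)) = 0 := by
        have := hdecomp g
        rw [hg, hgsum, zero_smul, add_zero] at this
        exact this.symm
      have h4 : ∀ i, (if i = j then 0 else g i) = 0 := by
        have h5 : (∑ i, (if i = j then 0 else g i) • (s i).rep) = 0 := by
          rw [← h3]
          refine Finset.sum_congr rfl fun i _ => ?_
          by_cases hij : i = j <;> simp [hij]
        exact Fintype.linearIndependent_iff.mp hsrep _ h5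
      intro i
      by_cases hij : i = j
      · subst hij
        have : (∑ i', g i') = g i + ∑ i' ∈ Finset.univ.erase i, g i' :=
          (Finset.add_sum_erase _ _ (Finset.mem_univ i)).symm
        rw [hgsum] at this
        have hz : ∀ i' ∈ Finset.univ.erase i, g i' = 0 := by
          intro i' hi'
          have := h4 i'
          simpa [Finset.mem_erase.mp hi' |>.1] using this
        rw [Finset.sum_congr rfl hz] at this
        simpa using this.symm
      · have := h4 i
        simpa [hij] using this
    -- P.rep not in span of t
    have hPt : P.rep ∉ span R (range t) := by
      intro hmem
      obtain ⟨d, hd⟩ := (mem_span_range_iff_exists_fun R).mp hmem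
      have hdsum : (∑ i, d i) = 0 := hsumzero d (hd ▸ hP)
      have h6 : (∑ i, d i • (if i = j then 0 else (s i).rep)) = P.rep := by
        have := hdecomp d
        rw [hd, hdsum, zero_smul, add_zero] at this
        exact this.symm
      -- so P.rep has two representations; compare coefficient at j
      have h7 : (∑ i, ((if i = j then 0 else d i) - c i) • (s i).rep) = 0 := by
        have e1 : (∑ i, (if i = j then 0 else d i) • (s i).rep) = P.rep := by
          rw [← h6]
          refine Finset.sum_congr rfl fun i _ => ?_
          by_cases hij : i = j <;> simp [hij]
        calc (∑ i, ((if i = j then 0 else d i) - c i) • (s i).rep)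
            = (∑ i, (if i = j then 0 else d i) • (s i).rep) - (∑ i, c i • (s i).rep) := by
              rw [← Finset.sum_sub_distrib]
              refine Finset.sum_congr rfl fun i _ => ?_
              rw [sub_smul]
          _ = 0 := by rw [e1, hc, sub_self]
      have h8 := Fintype.linearIndependent_iff.mp hsrep _ h7 j
      simp at h8
      exact hj h8
    -- now use the auxiliary projective points
    set Q : Fin m → Projectivization R V := fun i => Projectivization.mk R (t i) (ht0 i) with hQ_def
    have hQ : Independent Q := (pankov_independent_mk_iff t ht0).mpr htind
    choose a ha using fun i => exists_smul_eq_mk_rep R (t i) (ht0 i)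
    have hQrep : ∀ i, (Q i).rep = (a i : R) • t i := fun i => (ha i).symm
    have hQle : span R (range fun i => (Q i).rep) ≤ span R (range t) := by
      rw [span_le]
      rintro x ⟨i, rfl⟩
      show (Q i).rep ∈ _
      rw [hQrep i]
      exact Submodule.smul_mem _ _ (subset_span ⟨i, rfl⟩)
    have hPQ : P.rep ∉ span R (range fun i => (Q i).rep) := fun h => hPt (hQle h)
    have hQS : ∀ i, (Q i).rep ∉ S := by
      intro i h
      apply htS i
      have := S.smul_mem ((a i)⁻¹ : Rˣ) h
      rwa [hQrep i, smul_smul, Units.inv_mul, one_smul] at this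
    have hfQ : ∀ i, (f (Q i)).rep ∈ span R' (range fun i' => (f (s i')).rep) :=
      fun i => pankov_claimA1 f Dall Iall s hs (Q i) (hQS i)
    have hfin := pankov_claimA1 f Dall Iall Q hQ P hPQ
    refine Submodule.span_le.mpr ?_ hfin
    rintro x ⟨i, rfl⟩
    exact hfQ i
  · exact pankov_claimA1 f (m := m) Dall Iall s hs P hP

private lemma pankov_fixlemma [FiniteDimensional R V] {m : ℕ} (hm : m < Module.finrank R V)
    (hPGL : ∀ u : V ≃ₗ[R] V, ∃ u' : V' ≃ₗ[R'] V',
        ∀ P, f (Projectivization.map u.toLinearMap u.injective P)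
          = Projectivization.map u'.toLinearMap u'.injective (f P))
    (Dall : ∀ A : Fin (m+1) → Projectivization R V, Independent A → ¬ Independent (f ∘ A))
    (Iall : ∀ B : Fin m → Projectivization R V, Independent B → Independent (f ∘ B))
    (u : V ≃ₗ[R] V) (r : Fin (m+1) → Projectivization R V) (hr : Independent r)
    (hfix : ∀ i, Projectivization.map u.toLinearMap u.injective (r i) = r i) :
    ∀ P, f (Projectivization.map u.toLinearMap u.injective P) = f P := by
  classical
  obtain ⟨u', hu'⟩ := hPGL u
  set Z : Fin (m+1) → V' := fun i => (f (r i)).rep with hZ_def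
  have hfix' : ∀ i, Projectivization.map u'.toLinearMap u'.injective (f (r i)) = f (r i) := by
    intro i
    rw [← hu', hfix i]
  have hZ0 : ∀ i, Z i ≠ 0 := fun i => (f (r i)).rep_nonzero
  have hu'Z0 : ∀ i, u' (Z i) ≠ 0 := fun i => by
    simp [LinearEquiv.map_eq_zero_iff, hZ0 i]
  have heig : ∀ i, ∃ a : R'ˣ, u' (Z i) = (a : R') • Z i := by
    intro i
    have h1 : Projectivization.mk R' (u' (Z i)) (hu'Z0 i)
        = Projectivization.mk R' (Z i) (hZ0 i) := by
      calc Projectivization.mk R' (u' (Z i)) (hu'Z0 i)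
          = Projectivization.map u'.toLinearMap u'.injective
              (Projectivization.mk R' (Z i) (hZ0 i)) := by
            rw [Projectivization.map_mk]; rfl
        _ = Projectivization.map u'.toLinearMap u'.injective (f (r i)) := by
            rw [show Projectivization.mk R' (Z i) (hZ0 i) = f (r i) from (f (r i)).mk_rep]
        _ = f (r i) := hfix' i
        _ = Projectivization.mk R' (Z i) (hZ0 i) := ((f (r i)).mk_rep).symm
    rw [mk_eq_mk_iff] at h1
    obtain ⟨b, hb⟩ := h1
    exact ⟨b, by rw [← hb]; rfl⟩
  choose a ha using heig
  set s : Fin m → Projectivization R V := fun i => r i.castSucc with hs_def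
  have hs : Independent s := pankov_indep_comp hr (Fin.castSucc_injective m)
  set zi : Fin m → V' := fun i => Z i.castSucc with hzi_def
  have hzi : LinearIndependent R' zi := by
    have := Projectivization.independent_iff.mp (Iall s hs)
    exact this
  have hZfam : (Projectivization.rep ∘ (f ∘ r)) = Fin.snoc zi (Z (Fin.last m)) := by
    funext i
    refine Fin.lastCases ?_ ?_ i
    · simp [hzi_def, hZ_def]
    · intro i'
      simp [hzi_def, hZ_def]
  have hlast : Z (Fin.last m) ∈ span R' (range zi) := by
    have hdep := Dall r hr
    rw [Projectivization.independent_iff, hZfam, linearIndependent_fin_snoc] at hdep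
    by_contra hcon
    exact hdep ⟨hzi, hcon⟩
  obtain ⟨c, hc⟩ := (mem_span_range_iff_exists_fun R').mp hlast
  -- all coefficients are nonzero
  have hcne : ∀ j, c j ≠ 0 := by
    intro j hj
    set h : Fin m → Fin (m+1) := fun i => if i = j then Fin.last m else i.castSucc with hh_def
    have hinj : Function.Injective h := by
      intro i1 i2 he
      by_cases h1 : i1 = j <;> by_cases h2 : i2 = j
      · rw [h1, h2]
      · exfalso
        rw [hh_def] at he
        simp only [h1, h2, if_pos rfl, if_neg h2] at he
        exact (Fin.castSucc_lt_last i2).ne (he.symm)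
      · exfalso
        rw [hh_def] at he
        simp only [h1, h2, if_pos rfl, if_neg h1] at he
        exact (Fin.castSucc_lt_last i1).ne he
      · rw [hh_def] at he
        simp only [if_neg h1, if_neg h2] at he
        exact Fin.castSucc_injective m he
    have hIB := Projectivization.independent_iff.mp (Iall (r ∘ h) (pankov_indep_comp hr hinj))
    set g : Fin m → R' := fun i => if i = j then -1 else c i with hg_def
    have hrel : (∑ i, g i • Z (h i)) = 0 := by
      have e1 : (∑ i, g i • Z (h i))
          = (∑ i ∈ Finset.univ.erase j, g i • Z (h i)) + g j • Z (h j) :=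
        (Finset.sum_erase_add _ _ (Finset.mem_univ j)).symm
      have e2 : (∑ i ∈ Finset.univ.erase j, g i • Z (h i))
          = ∑ i ∈ Finset.univ.erase j, c i • zi i := by
        refine Finset.sum_congr rfl fun i hi => ?_
        have hij : i ≠ j := (Finset.mem_erase.mp hi).1
        simp [hg_def, hh_def, hij, hzi_def]
      have e3 : (∑ i ∈ Finset.univ.erase j, c i • zi i) = Z (Fin.last m) := by
        rw [← hc]
        rw [← Finset.sum_erase_add _ _ (Finset.mem_univ j)]
        rw [hj, zero_smul, add_zero]
      have e4 : g j • Z (h j) = -(Z (Fin.last m)) := by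
        simp [hg_def, hh_def]
      rw [e1, e2, e3, e4, add_neg_cancel]
    have := Fintype.linearIndependent_iff.mp hIB g (by exact hrel) j
    simp [hg_def] at this
  -- all eigenvalues on zi agree with the one on Z last
  have heq : ∀ i : Fin m, (a i.castSucc : R') = (a (Fin.last m) : R') := by
    intro i
    have e1 : u' (Z (Fin.last m)) = ∑ i', (c i' * (a i'.castSucc : R')) • zi i' := by
      rw [← hc, map_sum]
      refine Finset.sum_congr rfl fun i' _ => ?_
      rw [LinearEquiv.map_smul, ha i'.castSucc, smul_smul]
    have e2 : u' (Z (Fin.last m)) = ∑ i', ((a (Fin.last m) : R') * c i') • zi i' := by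
      rw [ha (Fin.last m), ← hc, Finset.smul_sum]
      refine Finset.sum_congr rfl fun i' _ => ?_
      rw [smul_smul]
    have e3 : (∑ i', (c i' * (a i'.castSucc : R') - (a (Fin.last m) : R') * c i') • zi i') = 0 := by
      have e0 : (∑ i', (c i' * (a i'.castSucc : R')) • zi i')
          - (∑ i', ((a (Fin.last m) : R') * c i') • zi i') = 0 := by
        rw [← e1, ← e2, sub_self]
      rw [← e0, ← Finset.sum_sub_distrib]
      exact Finset.sum_congr rfl fun i' _ => (sub_smul _ _ _)
    have h9 := Fintype.linearIndependent_iff.mp hzi _ e3 i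
    have h10 : c i * ((a i.castSucc : R') - (a (Fin.last m) : R')) = 0 := by
      linear_combination h9
    rcases mul_eq_zero.mp h10 with h | h
    · exact absurd h (hcne i)
    · exact sub_eq_zero.mp h
  -- u' acts as a scalar on the span of zi
  set mu : R' := (a (Fin.last m) : R') with hmu_def
  have hspan : ∀ y ∈ span R' (range zi), u' y = mu • y := by
    intro y hy
    set phi : V' →ₗ[R'] V' := u'.toLinearMap - mu • LinearMap.id with hphi_def
    have hker : span R' (range zi) ≤ LinearMap.ker phi := by
      rw [span_le]
      rintro x ⟨i, rfl⟩
      show phi (zi i) = 0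
      rw [hphi_def]
      simp only [LinearMap.sub_apply, LinearMap.smul_apply, LinearMap.id_apply,
        LinearEquiv.coe_coe]
      rw [show u' (zi i) = (a i.castSucc : R') • zi i from ha i.castSucc, heq i, hmu_def, sub_self]
    have h0 : phi y = 0 := hker hy
    rw [hphi_def] at h0
    simp only [LinearMap.sub_apply, LinearMap.smul_apply, LinearMap.id_apply,
      LinearEquiv.coe_coe] at h0
    exact sub_eq_zero.mp h0
  intro P
  rw [hu' P]
  have hPin : (f P).rep ∈ span R' (range zi) := pankov_claimA f hm Dall Iall s hs P
  have hmu0 : mu ≠ 0 := Units.ne_zero _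
  have hfp0 : u' (f P).rep ≠ 0 := by simp [LinearEquiv.map_eq_zero_iff, (f P).rep_nonzero]
  calc Projectivization.map u'.toLinearMap u'.injective (f P)
      = Projectivization.mk R' (u' (f P).rep) hfp0 := by
        conv_lhs => rw [← (f P).mk_rep]
        rw [Projectivization.map_mk]; rfl
    _ = Projectivization.mk R' (f P).rep (f P).rep_nonzero := by
        rw [mk_eq_mk_iff]
        exact ⟨Units.mk0 mu hmu0, (hspan _ hPin).symm⟩
    _ = f P := (f P).mk_rep

private lemma pankov_transfer [FiniteDimensional R V] {j : ℕ}
    (hPGL : ∀ u : V ≃ₗ[R] V, ∃ u' : V' ≃ₗ[R'] V',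
        ∀ P, f (Projectivization.map u.toLinearMap u.injective P)
          = Projectivization.map u'.toLinearMap u'.injective (f P))
    (A B : Fin j → Projectivization R V) (hA : Independent A) (hB : Independent B)
    (hfA : ¬ Independent (f ∘ A)) : ¬ Independent (f ∘ B) := by
  obtain ⟨u, hu⟩ := pankov_exists_linEquiv_map (fun i => (A i).rep) (fun i => (B i).rep)
    (Projectivization.independent_iff.mp hA) (Projectivization.independent_iff.mp hB)
  obtain ⟨u', hu'⟩ := hPGL u
  have hBA : ∀ i, Projectivization.map u.toLinearMap u.injective (A i) = B i := by
    intro i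
    conv_lhs => rw [← (A i).mk_rep]
    rw [Projectivization.map_mk]
    conv_rhs => rw [← (B i).mk_rep]
    rw [mk_eq_mk_iff]
    exact ⟨1, by simp [hu i]⟩
  intro hIB
  apply hfA
  have hcomp : f ∘ B = fun i => Projectivization.map u'.toLinearMap u'.injective ((f ∘ A) i) := by
    funext i
    show f (B i) = _
    rw [← hBA i, hu' (A i)]
    rfl
  rw [hcomp] at hIB
  exact (pankov_indep_pmap_iff u' (f ∘ A)).mp hIB


private lemma pankov_constancy [FiniteDimensional R V] {m : ℕ} (hm1 : m + 1 < Module.finrank R V)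
    (hPGL : ∀ u : V ≃ₗ[R] V, ∃ u' : V' ≃ₗ[R'] V',
        ∀ P, f (Projectivization.map u.toLinearMap u.injective P)
          = Projectivization.map u'.toLinearMap u'.injective (f P))
    (Dall : ∀ A : Fin (m+1) → Projectivization R V, Independent A → ¬ Independent (f ∘ A))
    (Iall : ∀ B : Fin m → Projectivization R V, Independent B → Independent (f ∘ B))
    (P Q : Projectivization R V) : f P = f Q := by
  classical
  by_cases hPQ : P = Q
  · rw [hPQ]
  have hm : m < Module.finrank R V := by omega
  -- the representatives are linearly independent
  have hxy : LinearIndependent R ![P.rep, Q.rep] := by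
    have hind : Independent ![P, Q] := (independent_pair_iff_ne P Q).mpr hPQ
    rw [Projectivization.independent_iff] at hind
    have hrw : (Projectivization.rep ∘ ![P, Q]) = ![P.rep, Q.rep] := by
      funext i; fin_cases i <;> simp
    rwa [hrw] at hind
  set x := P.rep
  set y := Q.rep
  -- a functional with φ x = φ y = 1
  let b := Module.Basis.sumExtend hxy
  obtain ⟨phi, hphix, hphiy⟩ : ∃ phi : V →ₗ[R] R, phi x = 1 ∧ phi y = 1 := by
    have hb0 : b (Sum.inl 0) = x := by
      have := pankov_sumExtend_inl ![x, y] hxy 0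
      simpa using this
    have hb1 : b (Sum.inl 1) = y := by
      have := pankov_sumExtend_inl ![x, y] hxy 1
      simpa using this
    have hcoord : ∀ (i j : Fin 2), b.coord (Sum.inl i) (b (Sum.inl j)) = if j = i then 1 else 0 := by
      intro i j
      rw [Module.Basis.coord_apply, Module.Basis.repr_self]
      rw [Finsupp.single_apply]
      simp
    refine ⟨b.coord (Sum.inl 0) + b.coord (Sum.inl 1), ?_, ?_⟩
    · have hx : (b.coord (Sum.inl 0) + b.coord (Sum.inl 1)) (b (Sum.inl 0)) = 1 := by
        simp only [LinearMap.add_apply]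
        rw [hcoord 0 0, hcoord 1 0]
        norm_num
      rwa [hb0] at hx
    · have hy : (b.coord (Sum.inl 0) + b.coord (Sum.inl 1)) (b (Sum.inl 1)) = 1 := by
        simp only [LinearMap.add_apply]
        rw [hcoord 0 1, hcoord 1 1]
        norm_num
      rwa [hb1] at hy
  set w : V := y - x with hw_def
  have hphiw : phi w = 0 := by rw [hw_def, map_sub, hphix, hphiy, sub_self]
  -- the transvection u
  set uL : V →ₗ[R] V := LinearMap.id + phi.smulRight w with huL_def
  set uI : V →ₗ[R] V := LinearMap.id - phi.smulRight w with huI_def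
  have hphi_sub : ∀ v : V, phi (v - phi v • w) = phi v := by
    intro v
    rw [map_sub, map_smul, hphiw, smul_eq_mul, mul_zero, sub_zero]
  have hphi_add : ∀ v : V, phi (v + phi v • w) = phi v := by
    intro v
    rw [map_add, map_smul, hphiw, smul_eq_mul, mul_zero, add_zero]
  have hcomp1 : uL.comp uI = LinearMap.id := by
    ext v
    show (v - phi v • w) + phi (v - phi v • w) • w = v
    rw [hphi_sub v]
    abel
  have hcomp2 : uI.comp uL = LinearMap.id := by
    ext v
    show (v + phi v • w) - phi (v + phi v • w) • w = v
    rw [hphi_add v]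
    abel
  set u : V ≃ₗ[R] V := LinearEquiv.ofLinear uL uI hcomp1 hcomp2 with hu_def
  have hufix : ∀ z, phi z = 0 → u z = z := by
    intro z hz
    show uL z = z
    simp [huL_def, hz]
  have hux : u x = y := by
    show uL x = y
    simp [huL_def, hphix, hw_def]
  -- an independent (m+1)-tuple inside ker phi
  have hrange : LinearMap.range phi = ⊤ := by
    rw [eq_top_iff']
    intro c
    exact ⟨c • x, by rw [map_smul, hphix, smul_eq_mul, mul_one]⟩
  have hkerrank : m + 1 ≤ Module.finrank R (LinearMap.ker phi) := by
    have h1 := LinearMap.finrank_range_add_finrank_ker phi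
    rw [hrange] at h1
    have h2 : Module.finrank R (⊤ : Submodule R R) = 1 := by
      rw [finrank_top, Module.finrank_self]
    omega
  let bK := Module.finBasis R (LinearMap.ker phi)
  set rv : Fin (m+1) → V := fun i => (bK (Fin.castLE hkerrank i) : V) with hrv_def
  have hrvind : LinearIndependent R rv := by
    have h1 := bK.linearIndependent
    have h2 := h1.map' (LinearMap.ker phi).subtype (Submodule.ker_subtype _)
    exact h2.comp (Fin.castLE hkerrank) ((Fin.strictMono_castLE hkerrank).injective)
  have hrv0 : ∀ i, rv i ≠ 0 := by
    intro i h
    have := hrvind.ne_zero i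
    exact this h
  set r : Fin (m+1) → Projectivization R V := fun i => Projectivization.mk R (rv i) (hrv0 i)
    with hr_def
  have hr : Independent r := (pankov_independent_mk_iff rv hrv0).mpr hrvind
  have hfixr : ∀ i, Projectivization.map u.toLinearMap u.injective (r i) = r i := by
    intro i
    rw [hr_def]
    simp only
    rw [Projectivization.map_mk]
    have : u.toLinearMap (rv i) = rv i := hufix (rv i) ((bK (Fin.castLE hkerrank i)).2)
    rw [mk_eq_mk_iff]
    exact ⟨1, by simp [this]⟩
  have hkey := pankov_fixlemma f hm hPGL Dall Iall u r hr hfixr P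
  have hmapP : Projectivization.map u.toLinearMap u.injective P = Q := by
    conv_lhs => rw [← P.mk_rep]
    rw [Projectivization.map_mk]
    have : u.toLinearMap P.rep = y := hux
    conv_rhs => rw [← Q.mk_rep]
    rw [mk_eq_mk_iff]
    exact ⟨1, by simp [this]; rfl⟩
  rw [hmapP] at hkey
  exact hkey.symm

end PankovMain

section PankovFinal
open Projectivization Set Submodule

/-- **Lemma 12 (Pankov).** Let `V` be a vector space over a division ring with
`dim V = n ≥ 2` and `V'` a vector space over a field. A non-constant PGL-mapping
`f : ℙ(V) → ℙ(V')` transfers every independent subset consisting of `n−1` elements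
to an independent subset. -/
theorem stmt_17 {R R' V V' : Type*} [DivisionRing R] [Field R']
    [AddCommGroup V] [Module R V] [AddCommGroup V'] [Module R' V']
    (n : ℕ) (hn : 2 ≤ n) [FiniteDimensional R V] (hdim : Module.finrank R V = n)
    (f : Projectivization R V → Projectivization R' V')
    (hPGL : ∀ u : V ≃ₗ[R] V, ∃ u' : V' ≃ₗ[R'] V',
        ∀ P, f (Projectivization.map u.toLinearMap u.injective P)
          = Projectivization.map u'.toLinearMap u'.injective (f P))
    (hnc : ∃ P Q, f P ≠ f Q) :
    ∀ P : Fin (n - 1) → Projectivization R V,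
      Projectivization.Independent P → Projectivization.Independent (f ∘ P) := by
  classical

  classical
  intro Pfam hPfam
  by_contra hbad
  have hex : ∃ j, ∃ A : Fin j → Projectivization R V, Independent A ∧ ¬ Independent (f ∘ A) :=
    ⟨n - 1, Pfam, hPfam, hbad⟩
  have hspec := Nat.find_spec hex
  have hkle : Nat.find hex ≤ n - 1 := Nat.find_le ⟨Pfam, hPfam, hbad⟩
  have hmin : ∀ j, j < Nat.find hex →
      ¬ ∃ A : Fin j → Projectivization R V, Independent A ∧ ¬ Independent (f ∘ A) :=
    fun j hj => Nat.find_min hex hj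
  set k := Nat.find hex with hk_def
  clear_value k
  obtain ⟨A₀, hA₀, hfA₀⟩ := hspec
  have hk0 : k ≠ 0 := by
    intro h0
    apply hfA₀
    rw [Projectivization.independent_iff]
    have : IsEmpty (Fin k) := by rw [h0]; infer_instance
    exact linearIndependent_empty_type
  obtain ⟨m, rfl⟩ : ∃ m, k = m + 1 := ⟨k - 1, (Nat.succ_pred_eq_of_ne_zero hk0).symm⟩
  have hm1 : m + 1 < Module.finrank R V := by
    rw [hdim]; omega
  have Dall : ∀ A : Fin (m+1) → Projectivization R V, Independent A → ¬ Independent (f ∘ A) := by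
    intro B hB
    exact pankov_transfer f hPGL A₀ B hA₀ hB hfA₀
  have Iall : ∀ B : Fin m → Projectivization R V, Independent B → Independent (f ∘ B) := by
    intro B hB
    by_contra hfB
    exact hmin m (by omega) ⟨B, hB, hfB⟩
  obtain ⟨P, Q, hne⟩ := hnc
  exact hne (pankov_constancy f hm1 hPGL Dall Iall P Q)

end PankovFinal
end

section
/- Let V and V' be left vector spaces over division rings R and R' with dim V = n finite, and let l : V → V' be a strong semilinear embedding. Then l is a GL-mapping: for every linear automorphism u of V there exists a linear automorphism u' of V' such that l ∘ u = u' ∘ l. -/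
open Set in
lemma sumExtend_inl_aux {K V ι : Type*} [DivisionRing K] [AddCommGroup V] [Module K V]
    {v : ι → V} (hs : LinearIndependent K v) (i : ι) :
    Module.Basis.sumExtend hs (Sum.inl i) = v i := by
  classical
  simp only [Module.Basis.sumExtend, Module.Basis.reindex_apply, Equiv.symm_symm, Equiv.trans_apply,
    Equiv.sumCongr_apply, Sum.map_inl, Equiv.refl_apply]
  show Module.Basis.extend _ ((Equiv.trans _ (Equiv.Set.sumDiffSubset _)) (Sum.inl i)) = v i
  rw [Module.Basis.extend_apply_self]
  rfl

/-- **(Pankov, Introduction).** Every strong semilinear embedding `l : V → V'`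
(dim V = n finite) is a GL-mapping: for every `u ∈ GL(V)` there is `u' ∈ GL(V')`
with `l ∘ u = u' ∘ l`. -/
theorem stmt_18 {R R' V V' : Type*} [DivisionRing R] [DivisionRing R']
    [AddCommGroup V] [Module R V] [AddCommGroup V'] [Module R' V']
    (n : ℕ) [FiniteDimensional R V] (hdim : Module.finrank R V = n)
    (σ : R →+* R') (l : V →ₛₗ[σ] V') (hinj : Function.Injective l)
    (hstrong : ∀ v : Fin n → V, LinearIndependent R v → LinearIndependent R' (⇑l ∘ v)) :
    ∀ u : V ≃ₗ[R] V, ∃ u' : V' ≃ₗ[R'] V', ⇑l ∘ ⇑u = ⇑u' ∘ ⇑l := by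
  classical
  intro u
  let e : Module.Basis (Fin n) R V := (Module.finBasis R V).reindex (finCongr hdim)
  have h1 : LinearIndependent R' (⇑l ∘ ⇑e) := hstrong _ e.linearIndependent
  have hue : LinearIndependent R (⇑u ∘ ⇑e) :=
    e.linearIndependent.map' u.toLinearMap u.ker
  have h2 : LinearIndependent R' (⇑l ∘ (⇑u ∘ ⇑e)) := hstrong _ hue
  let b1 := Module.Basis.sumExtend h1
  let b2 := Module.Basis.sumExtend h2
  -- cardinality of the extension index sets are equal
  have hcard : Nonempty (Module.Basis.sumExtendIndex h1 ≃ Module.Basis.sumExtendIndex h2) := by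
    have hmk : Cardinal.mk (Fin n ⊕ Module.Basis.sumExtendIndex h1)
        = Cardinal.mk (Fin n ⊕ Module.Basis.sumExtendIndex h2) :=
      Cardinal.mk_congr (b1.indexEquiv b2)
    rw [Cardinal.mk_sum, Cardinal.mk_sum] at hmk
    have : Cardinal.mk (Module.Basis.sumExtendIndex h1) = Cardinal.mk (Module.Basis.sumExtendIndex h2) := by
      have := Cardinal.eq_of_add_eq_add_left hmk (by
        simp only [Cardinal.mk_fintype, Fintype.card_fin, Cardinal.lift_natCast]
        exact Cardinal.nat_lt_aleph0 n)
      exact Cardinal.lift_injective this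
    exact Cardinal.eq.mp this
  obtain ⟨ψ⟩ := hcard
  let u' : V' ≃ₗ[R'] V' := b1.equiv b2 (Equiv.sumCongr (Equiv.refl (Fin n)) ψ)
  refine ⟨u', ?_⟩
  funext x
  have hx : x = ∑ i, e.repr x i • e i := (e.sum_repr x).symm
  have key1 : ∀ i, l (e i) = b1 (Sum.inl i) := fun i => (sumExtend_inl_aux h1 i).symm
  have key2 : ∀ i, l (u (e i)) = b2 (Sum.inl i) := fun i => (sumExtend_inl_aux h2 i).symm
  calc (⇑l ∘ ⇑u) x = l (u (∑ i, e.repr x i • e i)) := by rw [← hx]; rfl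
    _ = ∑ i, σ (e.repr x i) • b2 (Sum.inl i) := by
        rw [map_sum, map_sum]
        refine Finset.sum_congr rfl fun i _ => ?_
        rw [LinearEquiv.map_smul, LinearMap.map_smulₛₗ, key2]
    _ = ∑ i, σ (e.repr x i) • u' (b1 (Sum.inl i)) := by
        refine Finset.sum_congr rfl fun i _ => ?_
        rw [Module.Basis.equiv_apply]
        rfl
    _ = u' (∑ i, σ (e.repr x i) • b1 (Sum.inl i)) := by
        rw [map_sum]; simp_rw [map_smul]
    _ = u' (l x) := by
        congr 1
        conv_rhs => rw [hx]
        rw [map_sum]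
        exact Finset.sum_congr rfl fun i _ => by rw [LinearMap.map_smulₛₗ, key1]
end

section
/- Let V and V' be left vector spaces over division rings R and R' with dim V = n finite, let l : V → V' be a strong semilinear embedding, and suppose dim V' > n. Choose y ∈ V' not belonging to the R'-subspace spanned by l(V), and define g : V → V' by g(x) = l(x) for x ≠ 0 and g(0) = y. Then g is a GL-mapping and the R'-subspace of V' spanned by g(V) has dimension n+1. -/
set_option maxHeartbeats 1000000


/-- **Example 3 (Pankov).** Let `l : V → V'` be a strong semilinear embedding with
`dim V' > n = dim V`, and let `y ∈ V'` lie outside the subspace spanned by `l(V)`.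
The map `g` with `g x = l x` for `x ≠ 0` and `g 0 = y` is a GL-mapping, and the
subspace of `V'` spanned by `g(V)` has dimension `n + 1`. -/
theorem stmt_19 {R R' V V' : Type*} [DivisionRing R] [DivisionRing R']
    [AddCommGroup V] [Module R V] [AddCommGroup V'] [Module R' V']
    (n : ℕ) [FiniteDimensional R V] (hdim : Module.finrank R V = n)
    (σ : R →+* R') (l : V →ₛₗ[σ] V') (hinj : Function.Injective l)
    (hstrong : ∀ v : Fin n → V, LinearIndependent R v → LinearIndependent R' (⇑l ∘ v))
    (hbig : (n : Cardinal) < Module.rank R' V')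
    (y : V') (hy : y ∉ Submodule.span R' (Set.range l))
    (g : V → V') (hg0 : g 0 = y) (hgx : ∀ x : V, x ≠ 0 → g x = l x) :
    (∀ u : V ≃ₗ[R] V, ∃ u' : V' ≃ₗ[R'] V', g ∘ ⇑u = ⇑u' ∘ g) ∧
    Module.rank R' (Submodule.span R' (Set.range g)) = ((n + 1 : ℕ) : Cardinal) := by
  classical
  obtain ⟨b⟩ : Nonempty (Module.Basis (Fin n) R V) :=
    ⟨(Module.finBasis R V).reindex (finCongr hdim)⟩
  set c : Fin n → V' := fun i => l (b i) with hc_def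
  have hc : LinearIndependent R' c := hstrong b b.linearIndependent
  -- every l x lies in the span of a basis image (general helper)
  have key : ∀ (b' : Module.Basis (Fin n) R V) (x : V),
      l x ∈ Submodule.span R' (Set.range fun i => l (b' i)) := by
    intro b' x
    have hle : (⊤ : Submodule R V) ≤
        Submodule.comap l (Submodule.span R' (Set.range fun i => l (b' i))) := by
      rw [← b'.span_eq, Submodule.span_le]
      rintro _ ⟨i, rfl⟩
      exact Submodule.subset_span ⟨i, rfl⟩
    exact hle (Submodule.mem_top)
  have hyc : ∀ (c' : Fin n → V'), (∀ i, ∃ x, l x = c' i) →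
      y ∉ Submodule.span R' (Set.range c') := by
    intro c' hc' hmem
    refine hy (Submodule.span_mono ?_ hmem)
    rintro _ ⟨i, rfl⟩
    obtain ⟨x, hx⟩ := hc' i
    exact ⟨x, hx⟩
  set f : Fin (n + 1) → V' := Fin.snoc c y with hf_def
  have hf : LinearIndependent R' f :=
    linearIndependent_fin_snoc.2 ⟨hc, hyc c (fun i => ⟨b i, rfl⟩)⟩
  set W : Submodule R' V' := Submodule.span R' (Set.range f) with hW_def
  have hSW : ∀ x : V, l x ∈ W := by
    intro x
    refine Submodule.span_mono ?_ (key b x)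
    rintro _ ⟨i, rfl⟩
    exact ⟨i.castSucc, by simp [hf_def, hc_def]⟩
  have hyW : y ∈ W := Submodule.subset_span ⟨Fin.last n, by simp [hf_def]⟩
  set Bf : Module.Basis (Fin (n + 1)) R' W := Module.Basis.span hf with hBfd
  have hBf : ∀ i, (Bf i : V') = f i := by
    rw [hBfd]; exact fun i => congrArg Subtype.val (Module.Basis.span_apply hf i)
  have hspan_g : Submodule.span R' (Set.range g) = W := by
    apply le_antisymm
    · rw [Submodule.span_le]
      rintro _ ⟨x, rfl⟩
      by_cases hx : x = 0
      · subst hx; rw [hg0]; exact hyW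
      · rw [hgx x hx]; exact hSW x
    · rw [hW_def, Submodule.span_le]
      rintro _ ⟨i, rfl⟩
      refine Fin.lastCases ?_ ?_ i
      · have : f (Fin.last n) = g 0 := by simp [hf_def, hg0]
        rw [this]; exact Submodule.subset_span ⟨0, rfl⟩
      · intro j
        have hbj : (b j : V) ≠ 0 := b.ne_zero j
        have : f j.castSucc = g (b j) := by
          simp [hf_def, hc_def, hgx _ hbj]
        rw [this]; exact Submodule.subset_span ⟨b j, rfl⟩
  constructor
  · intro u
    set b₂ : Module.Basis (Fin n) R V := b.map u with hb₂_def
    set c₂ : Fin n → V' := fun i => l (b₂ i) with hc₂_def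
    have hc₂ : LinearIndependent R' c₂ := hstrong b₂ b₂.linearIndependent
    set f₂ : Fin (n + 1) → V' := Fin.snoc c₂ y with hf₂_def
    have hf₂ : LinearIndependent R' f₂ :=
      linearIndependent_fin_snoc.2 ⟨hc₂, hyc c₂ (fun i => ⟨b₂ i, rfl⟩)⟩
    have hspan_eq : Submodule.span R' (Set.range f₂) = W := by
      apply le_antisymm
      · rw [Submodule.span_le]
        rintro _ ⟨i, rfl⟩
        refine Fin.lastCases ?_ ?_ i
        · simpa [hf₂_def] using hyW
        · intro j
          have : f₂ j.castSucc = l (b₂ j) := by simp [hf₂_def, hc₂_def]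
          rw [this]; exact hSW _
      · rw [hW_def, Submodule.span_le]
        rintro _ ⟨i, rfl⟩
        refine Fin.lastCases ?_ ?_ i
        · have : f (Fin.last n) = y := by simp [hf_def]
          rw [this]
          exact Submodule.subset_span ⟨Fin.last n, by simp [hf₂_def]⟩
        · intro j
          have : f j.castSucc = l (b j) := by simp [hf_def, hc_def]
          rw [this]
          refine Submodule.span_mono ?_ (key b₂ (b j))
          rintro _ ⟨i, rfl⟩
          exact ⟨i.castSucc, by simp [hf₂_def, hc₂_def]⟩
    set Bf₂ : Module.Basis (Fin (n + 1)) R' W :=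
      (Module.Basis.span hf₂).map (LinearEquiv.ofEq _ _ hspan_eq) with hBf₂_def
    have hBf₂ : ∀ i, (Bf₂ i : V') = f₂ i := by
      intro i
      simp [hBf₂_def, Module.Basis.span_apply]
    set e : W ≃ₗ[R'] W := Bf.equiv Bf₂ (Equiv.refl _) with he_def
    have he : ∀ i, e (Bf i) = Bf₂ i := fun i => Bf.equiv_apply i Bf₂ (Equiv.refl _)
    obtain ⟨W', hW'⟩ := Submodule.exists_isCompl W
    set P := Submodule.prodEquivOfIsCompl W W' hW' with hP_def
    set u' : V' ≃ₗ[R'] V' :=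
      P.symm.trans ((e.prodCongr (LinearEquiv.refl R' W')).trans P) with hu'_def
    have hu'W : ∀ w : W, u' (w : V') = (e w : V') := by
      intro w
      simp [hu'_def, hP_def]
    -- semilinear maps agreeing on the basis
    set φ₁ : V →ₛₗ[σ] V' :=
      W.subtype.comp (e.toLinearMap.comp (l.codRestrict W hSW)) with hφ₁_def
    set φ₂ : V →ₛₗ[σ] V' := l.comp (u : V →ₗ[R] V) with hφ₂_def
    have hφ : φ₁ = φ₂ := by
      apply b.ext
      intro i
      have h1 : (l.codRestrict W hSW) (b i) = Bf i.castSucc := by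
        apply Subtype.ext
        simp [hBf, hf_def, hc_def]
      have h2 : φ₁ (b i) = (e (Bf i.castSucc) : V') := by
        simp [hφ₁_def, h1]
      rw [h2, he, ]
      have h3 : (Bf₂ i.castSucc : V') = f₂ i.castSucc := hBf₂ _
      rw [h3]
      simp [hf₂_def, hc₂_def, hφ₂_def, hb₂_def]
    refine ⟨u', ?_⟩
    funext x
    by_cases hx : x = 0
    · subst hx
      have hu0 : u (0 : V) = 0 := map_zero u
      have hyBf : (⟨y, hyW⟩ : W) = Bf (Fin.last n) := by
        apply Subtype.ext
        simp [hBf, hf_def]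
      calc (g ∘ ⇑u) 0 = y := by simp [hu0, hg0]
        _ = (f₂ (Fin.last n)) := by simp [hf₂_def]
        _ = (Bf₂ (Fin.last n) : V') := (hBf₂ _).symm
        _ = (e (Bf (Fin.last n)) : V') := by rw [he]
        _ = u' y := by rw [← hyBf]; exact (hu'W ⟨y, hyW⟩).symm
        _ = (⇑u' ∘ g) 0 := by simp [hg0]
    · have hux : u x ≠ 0 := fun h => hx (by simpa using u.injective (by simpa using h))
      have h1 : (g ∘ ⇑u) x = l (u x) := by simp [hgx _ hux]
      have h2 : (⇑u' ∘ g) x = u' (l x) := by simp [hgx _ hx]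
      have h3 : u' (l x) = (e ⟨l x, hSW x⟩ : V') := hu'W ⟨l x, hSW x⟩
      have h4 : φ₁ x = (e ⟨l x, hSW x⟩ : V') := rfl
      have h5 : φ₂ x = l (u x) := rfl
      rw [h1, h2, h3, ← h4, hφ, h5]
  · rw [hspan_g]
    rw [rank_eq_card_basis Bf]
    simp
end
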